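/- arXiv:2101.09708 — 15 statements merged into one kernel-verified Lean document; each statement's English description precedes it below -/
import Mathlib

section
/- Let m ≥ 2 be an integer and let a be an integer with 1 ≤ a ≤ m − 1. Then a·(m² − 1) = (a−1)·m² + (m−1)·m + (m−a), each of the three digits a−1, m−1, m−a lies in [0, m−1], and one step of the three-digit Kaprekar routine applied to the number with digit multiset {a−1, m−1, m−a} yields g_m(a)·(m² − 1), where g_m(a) = a − 1 if 2a ≥ m + 1 and g_m(a) = m − a otherwise. Equivalently, (m−1) − min(a−1, m−a) = g_m(a). -/
/-- For `m ≥ 2` and `1 ≤ a ≤ m-1`: the base-`m` expansion of `a*(m²-1)` has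
digits `a-1, m-1, m-a`, each a valid digit, and one step of the three-digit
Kaprekar routine applied to this digit multiset (whose largest digit is `m-1`)
yields `g_m(a)*(m²-1)` where `g_m(a) = a-1` if `2a ≥ m+1` and `m-a` otherwise;
equivalently `(m-1) - min (a-1) (m-a) = g_m(a)`. -/
theorem threeDigitKaprekar_step (m a : ℕ) (hm : 2 ≤ m) (ha1 : 1 ≤ a) (ha2 : a ≤ m - 1) :
    a * (m ^ 2 - 1) = (a - 1) * m ^ 2 + (m - 1) * m + (m - a) ∧
    a - 1 ≤ m - 1 ∧ m - 1 ≤ m - 1 ∧ m - a ≤ m - 1 ∧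
    ((m - 1) * m ^ 2 + max (a - 1) (m - a) * m + min (a - 1) (m - a)) -
        (min (a - 1) (m - a) * m ^ 2 + max (a - 1) (m - a) * m + (m - 1)) =
      (if m + 1 ≤ 2 * a then a - 1 else m - a) * (m ^ 2 - 1) ∧
    (m - 1) - min (a - 1) (m - a) = (if m + 1 ≤ 2 * a then a - 1 else m - a) := by
  have h1m : 1 ≤ m := by omega
  have ham : a ≤ m := by omega
  have hsq : 1 ≤ m ^ 2 := by nlinarith
  have key : ∀ x : ℕ, x ≤ m - 1 →
      ((m - 1) * m ^ 2 + max (a - 1) (m - a) * m + x) -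
        (x * m ^ 2 + max (a - 1) (m - a) * m + (m - 1)) = (m - 1 - x) * (m ^ 2 - 1) := by
    intro x hx
    have hle : x * m ^ 2 + max (a - 1) (m - a) * m + (m - 1) ≤
        (m - 1) * m ^ 2 + max (a - 1) (m - a) * m + x := by
      have h2 : m - 1 - x ≤ (m - 1 - x) * m ^ 2 := Nat.le_mul_of_pos_right _ (by omega)
      have h3 : (m - 1 - x) * m ^ 2 = (m - 1) * m ^ 2 - x * m ^ 2 := Nat.sub_mul _ _ _
      have h4 := Nat.mul_le_mul_right (m ^ 2) hx
      omega
    zify [hle, h1m, hsq, hx]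
    ring
  refine ⟨?_, by omega, le_rfl, by omega, ?_, ?_⟩
  · zify [ha1, ham, h1m, hsq]; ring
  · rw [key (min (a - 1) (m - a)) (by omega)]
    congr 1
    split_ifs <;> omega
  · split_ifs <;> omega
end

section
/- Let m ≥ 2 be an even integer and define g_m : ℕ → ℕ by g_m(a) = a − 1 if 2a ≥ m + 1 and g_m(a) = m − a otherwise. Then for every a with 1 ≤ a ≤ m − 1, there exists t ≥ 1 with g_m^[t](a) = a if and only if a = m/2. In particular, m/2 is the unique nontrivial periodic point (a fixed point) of g_m, so the three-digit Kaprekar routine in even base m has a unique nontrivial fixed set {(m/2)·(m² − 1)} of cardinality 1. -/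
/-- Potential function: strictly decreases under the Kaprekar multiplier map
away from the fixed point `k = m/2`. -/
def kapPhi (k x : ℕ) : ℕ := if x < k then 2 * (k - x) + 1 else x - k

/-- For even `m ≥ 2`, with `g_m(a) = a-1` if `2a ≥ m+1` and `m-a` otherwise:
for every `1 ≤ a ≤ m-1`, `a` is periodic under `g_m` iff `a = m/2`; in
particular `m/2` is the unique nontrivial periodic (indeed fixed) point. -/
theorem threeDigitKaprekar_even_fixedSet (m : ℕ) (hm : 2 ≤ m) (hme : Even m)
    (g : ℕ → ℕ) (hg : ∀ a, g a = if m + 1 ≤ 2 * a then a - 1 else m - a) :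
    ∀ a : ℕ, 1 ≤ a → a ≤ m - 1 → ((∃ t : ℕ, 1 ≤ t ∧ g^[t] a = a) ↔ a = m / 2) := by
  obtain ⟨k, hk⟩ := hme
  have hdiv : m / 2 = k := by omega
  have hB : ∀ x, kapPhi k (g x) ≤ kapPhi k x := by
    intro x
    rw [hg x]
    unfold kapPhi
    split_ifs <;> omega
  have hC : ∀ x, x ≠ k → kapPhi k (g x) < kapPhi k x := by
    intro x hx
    rw [hg x]
    unfold kapPhi
    split_ifs <;> omega
  have hfix : g k = k := by rw [hg]; split_ifs <;> omega
  intro a ha1 ha2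
  constructor
  · rintro ⟨t, ht1, ht2⟩
    by_contra hne
    rw [hdiv] at hne
    have key : ∀ s, 1 ≤ s → kapPhi k (g^[s] a) < kapPhi k a := by
      intro s hs
      induction s with
      | zero => omega
      | succ n ih =>
        rcases Nat.eq_or_lt_of_le hs with h | h
        · have : n = 0 := by omega
          subst this
          simpa using hC a hne
        · rw [Function.iterate_succ_apply']
          calc kapPhi k (g (g^[n] a)) ≤ kapPhi k (g^[n] a) := hB _
            _ < kapPhi k a := ih (by omega)
    have := key t ht1
    rw [ht2] at this
    omega
  · intro h
    exact ⟨1, le_refl 1, by simp [h, hdiv, hfix]⟩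
end

section
/- Let m ≥ 3 be an odd integer and define g_m : ℕ → ℕ by g_m(a) = a − 1 if 2a ≥ m + 1 and g_m(a) = m − a otherwise. Then g_m((m−1)/2) = (m+1)/2 and g_m((m+1)/2) = (m−1)/2, and for every a with 1 ≤ a ≤ m − 1, there exists t ≥ 1 with g_m^[t](a) = a if and only if a = (m−1)/2 or a = (m+1)/2. In particular, the three-digit Kaprekar routine in odd base m has a unique nontrivial fixed set {((m−1)/2)·(m² − 1), ((m+1)/2)·(m² − 1)} of cardinality 2. -/
/-- For odd `m ≥ 3`, with `g_m(a) = a-1` if `2a ≥ m+1` and `m-a` otherwise: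
`g_m` swaps `(m-1)/2` and `(m+1)/2`, and for every `1 ≤ a ≤ m-1`, `a` is
periodic under `g_m` iff `a = (m-1)/2` or `a = (m+1)/2`; so the unique
nontrivial fixed set has cardinality 2. -/
theorem threeDigitKaprekar_odd_fixedSet (m : ℕ) (hm : 3 ≤ m) (hmo : Odd m)
    (g : ℕ → ℕ) (hg : ∀ a, g a = if m + 1 ≤ 2 * a then a - 1 else m - a) :
    g ((m - 1) / 2) = (m + 1) / 2 ∧ g ((m + 1) / 2) = (m - 1) / 2 ∧
    ∀ a : ℕ, 1 ≤ a → a ≤ m - 1 →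
      ((∃ t : ℕ, 1 ≤ t ∧ g^[t] a = a) ↔ a = (m - 1) / 2 ∨ a = (m + 1) / 2) := by
  obtain ⟨k, hk⟩ := hmo
  have hk1 : 1 ≤ k := by omega
  have hgk : g k = k + 1 := by rw [hg, if_neg (by omega)]; omega
  have hgk1 : g (k + 1) = k := by rw [hg, if_pos (by omega)]; omega
  have hm1 : (m - 1) / 2 = k := by omega
  have hm2 : (m + 1) / 2 = k + 1 := by omega
  refine ⟨by rw [hm1, hm2, hgk], by rw [hm1, hm2, hgk1], ?_⟩
  intro a ha1 ha2
  rw [hm1, hm2]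
  have ha2' : a ≤ 2 * k := by omega
  constructor
  · rintro ⟨t, ht1, ht⟩
    by_contra hcon
    push_neg at hcon
    obtain ⟨hak, hak1⟩ := hcon
    set φ : ℕ → ℕ := fun b => if k + 1 ≤ b then 2 * (b - (k + 1)) else 2 * (k - b) + 1
      with hφ
    have hrange : ∀ b, 1 ≤ b → b ≤ 2 * k → 1 ≤ g b ∧ g b ≤ 2 * k := by
      intro b hb1 hb2; rw [hg]; split_ifs with h <;> omega
    have hstep : ∀ b, 1 ≤ b → b ≤ 2 * k → b ≠ k → b ≠ k + 1 → φ (g b) < φ b := by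
      intro b hb1 hb2 hbk hbk1
      simp only [hφ, hg]
      split_ifs <;> omega
    have hiter_range : ∀ n, 1 ≤ g^[n] a ∧ g^[n] a ≤ 2 * k := by
      intro n; induction n with
      | zero => exact ⟨ha1, ha2'⟩
      | succ n ih => rw [Function.iterate_succ_apply']; exact hrange _ ih.1 ih.2
    have hmul : ∀ s, g^[t * s] a = a := by
      intro s; rw [Function.iterate_mul]; exact Function.iterate_fixed ht s
    have hnotk : ∀ n, ¬(g^[n] a = k ∨ g^[n] a = k + 1) := by
      intro n hn
      have hall : ∀ j, g^[n + j] a = k ∨ g^[n + j] a = k + 1 := by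
        intro j; induction j with
        | zero => simpa using hn
        | succ j ih =>
          have hnj : n + (j + 1) = (n + j) + 1 := by omega
          rw [hnj, Function.iterate_succ_apply']
          rcases ih with h | h
          · right; rw [h, hgk]
          · left; rw [h, hgk1]
      have hge : n ≤ t * (n + 1) := le_trans (by omega) (Nat.le_mul_of_pos_left _ ht1)
      have hfin := hall (t * (n + 1) - n)
      rw [Nat.add_sub_cancel' hge, hmul (n + 1)] at hfin
      omega
    have hdec : ∀ n, φ (g^[n] a) + n ≤ φ a := by
      intro n; induction n with
      | zero => simp
      | succ n ih =>
        have h1 := hiter_range n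
        have h2 := hnotk n
        push_neg at h2
        have h3 := hstep _ h1.1 h1.2 h2.1 h2.2
        rw [Function.iterate_succ_apply']
        omega
    have hbig := hdec (t * (φ a + 1))
    rw [hmul] at hbig
    have hge2 : φ a + 1 ≤ t * (φ a + 1) := Nat.le_mul_of_pos_left _ ht1
    omega
  · rintro (rfl | rfl)
    · exact ⟨2, by norm_num, by
        simp [Function.iterate_succ_apply', hgk, hgk1]⟩
    · exact ⟨2, by norm_num, by
        simp [Function.iterate_succ_apply', hgk, hgk1]⟩
end

section
/- Let m ≥ 2 be an even integer and define g_m : ℕ → ℕ by g_m(a) = a − 1 if 2a ≥ m + 1 and g_m(a) = m − a otherwise. Then for every a with 1 ≤ a ≤ m − 1, there exists t ≤ m/2 such that g_m^[t](a) = m/2. In particular, every three-digit number in even base m enters the fixed set within at most m/2 + 1 iterations of the Kaprekar routine. -/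
/-- For even `m ≥ 2`, with `g_m(a) = a-1` if `2a ≥ m+1` and `m-a` otherwise:
every `1 ≤ a ≤ m-1` reaches the fixed point `m/2` within `m/2` iterations of
`g_m` (so every three-digit number enters the fixed set within `m/2 + 1`
iterations of the Kaprekar routine). -/
theorem threeDigitKaprekar_even_maxStep (m : ℕ) (hm : 2 ≤ m) (hme : Even m)
    (g : ℕ → ℕ) (hg : ∀ a, g a = if m + 1 ≤ 2 * a then a - 1 else m - a) :
    ∀ a : ℕ, 1 ≤ a → a ≤ m - 1 → ∃ t : ℕ, t ≤ m / 2 ∧ g^[t] a = m / 2 := by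
  obtain ⟨k, hk⟩ := hme
  have hm2 : m / 2 = k := by omega
  have key : ∀ j, g^[j] (k + j) = k := by
    intro j
    induction j with
    | zero => simp
    | succ n ih =>
      rw [Function.iterate_succ_apply, hg]
      have h1 : m + 1 ≤ 2 * (k + (n + 1)) := by omega
      rw [if_pos h1]
      have : k + (n + 1) - 1 = k + n := by omega
      rw [this, ih]
  intro a ha1 ha2
  rcases le_or_gt k a with h | h
  · obtain ⟨j, rfl⟩ : ∃ j, a = k + j := ⟨a - k, by omega⟩
    exact ⟨j, by omega, by rw [hm2]; simpa using key j⟩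
  · refine ⟨1 + (k - a), by omega, ?_⟩
    rw [hm2, add_comm, Function.iterate_add_apply, Function.iterate_one, hg]
    have h1 : ¬ (m + 1 ≤ 2 * a) := by omega
    rw [if_neg h1]
    have : m - a = k + (k - a) := by omega
    rw [this, key]
end

section
/- Let m ≥ 3 be an odd integer and define g_m : ℕ → ℕ by g_m(a) = a − 1 if 2a ≥ m + 1 and g_m(a) = m − a otherwise. Then for every a with 1 ≤ a ≤ m − 1, there exists t ≤ (m−1)/2 such that g_m^[t](a) = (m−1)/2 or g_m^[t](a) = (m+1)/2. In particular, every three-digit number in odd base m enters the fixed set within at most (m+1)/2 iterations of the Kaprekar routine. -/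
/-- For odd `m ≥ 3`, with `g_m(a) = a-1` if `2a ≥ m+1` and `m-a` otherwise:
every `1 ≤ a ≤ m-1` reaches the two-cycle `{(m-1)/2, (m+1)/2}` within
`(m-1)/2` iterations of `g_m` (so every three-digit number enters the fixed
set within `(m+1)/2` iterations of the Kaprekar routine). -/
theorem threeDigitKaprekar_odd_maxStep (m : ℕ) (hm : 3 ≤ m) (hmo : Odd m)
    (g : ℕ → ℕ) (hg : ∀ a, g a = if m + 1 ≤ 2 * a then a - 1 else m - a) :
    ∀ a : ℕ, 1 ≤ a → a ≤ m - 1 →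
      ∃ t : ℕ, t ≤ (m - 1) / 2 ∧ (g^[t] a = (m - 1) / 2 ∨ g^[t] a = (m + 1) / 2) := by
  obtain ⟨k, hk⟩ := hmo
  subst hk
  have hk1 : 1 ≤ k := by omega
  have key : ∀ j, g^[j] (k + 1 + j) = k + 1 := by
    intro j
    induction j with
    | zero => simp
    | succ n ih =>
      have h1 : g (k + 1 + (n + 1)) = k + 1 + n := by rw [hg]; split <;> omega
      calc g^[n+1] (k + 1 + (n + 1)) = g^[n] (g (k + 1 + (n + 1))) := by
            rw [Function.iterate_succ_apply]
        _ = k + 1 := by rw [h1]; exact ih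
  intro a ha1 ha2
  by_cases hcase : k + 1 ≤ a
  · refine ⟨a - (k + 1), by omega, Or.inr ?_⟩
    have h := key (a - (k + 1))
    have hrw : k + 1 + (a - (k + 1)) = a := by omega
    rw [hrw] at h
    rw [h]; omega
  · refine ⟨1 + (k - a), by omega, Or.inr ?_⟩
    have hga : g a = 2 * k + 1 - a := by rw [hg]; split <;> omega
    have h2 : g^[1 + (k - a)] a = g^[k - a] (g a) := by
      rw [Nat.add_comm, Function.iterate_add_apply]
      simp
    rw [h2, hga]
    have h := key (k - a)
    have hrw : k + 1 + (k - a) = 2 * k + 1 - a := by omega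
    rw [hrw] at h
    rw [h]; omega
end

section
/- Let m ≥ 2 be an integer and let a be an integer with 1 ≤ a ≤ m. Then a·(m − 1) = (a−1)·m + (m−a), both digits a−1 and m−a lie in [0, m−1], and one step of the two-digit Kaprekar routine applied to the number with digit pair {a−1, m−a} yields |2a − (m+1)|·(m − 1). Equivalently, |(a−1) − (m−a)| = |2a − (m+1)| = h_m(a), so the routine sends a·(m−1) to h_m(a)·(m−1). -/
/-- For `m ≥ 2` and `1 ≤ a ≤ m`: the base-`m` expansion of `a*(m-1)` has
digits `a-1` and `m-a`, both valid digits, and one step of the two-digit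
Kaprekar routine applied to this digit pair yields `|2a-(m+1)|*(m-1)`;
equivalently `|(a-1)-(m-a)| = |2a-(m+1)| = h_m(a)`. -/
theorem twoDigitKaprekar_step (m a : ℕ) (hm : 2 ≤ m) (ha1 : 1 ≤ a) (ha2 : a ≤ m) :
    a * (m - 1) = (a - 1) * m + (m - a) ∧
    a - 1 ≤ m - 1 ∧ m - a ≤ m - 1 ∧
    (m * max (a - 1) (m - a) + min (a - 1) (m - a)) -
        (m * min (a - 1) (m - a) + max (a - 1) (m - a)) =
      (2 * (a : ℤ) - (m + 1)).natAbs * (m - 1) ∧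
    max (a - 1) (m - a) - min (a - 1) (m - a) = (2 * (a : ℤ) - (m + 1)).natAbs := by
  have h1 : 1 ≤ m := by omega
  refine ⟨by zify [ha1, ha2, h1]; ring, by omega, by omega, ?_, ?_⟩
  · rcases le_total (a - 1) (m - a) with h | h
    · rw [max_eq_right h, min_eq_left h]
      have hab : (2 * (a : ℤ) - (m + 1)).natAbs = m + 1 - 2 * a := by omega
      rw [hab]
      zify [ha1, ha2, h1, show m * (a-1) + (m-a) ≤ m * (m-a) + (a-1) by nlinarith [Nat.sub_le_sub_right ha2 1],
        show 2 * a ≤ m + 1 by omega]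
      ring
    · rw [max_eq_left h, min_eq_right h]
      have hab : (2 * (a : ℤ) - (m + 1)).natAbs = 2 * a - (m + 1) := by omega
      rw [hab]
      zify [ha1, ha2, h1, show m * (m-a) + (a-1) ≤ m * (a-1) + (m-a) by nlinarith [Nat.sub_le_sub_right ha2 1],
        show m + 1 ≤ 2 * a by omega]
      ring
  · rcases le_total (a - 1) (m - a) with h | h
    · rw [max_eq_right h, min_eq_left h]; omega
    · rw [max_eq_left h, min_eq_right h]; omega
end

section
/- Let m ≥ 2 be an integer and define h_m : ℕ → ℕ by h_m(a) = |2a − (m+1)|. Then there exists an integer a with 1 ≤ a ≤ m and h_m(a) = a if and only if 3 divides m + 1. Moreover, when 3 divides m + 1, the unique such a is a = (m+1)/3. Hence the two-digit Kaprekar routine in base m has a nontrivial fixed set of cardinality 1 if and only if 3 ∣ m+1, and such a fixed set is unique. -/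
/-- For `m ≥ 2`, with `h_m(a) = |2a - (m+1)|`: there exists `1 ≤ a ≤ m` with
`h_m(a) = a` iff `3 ∣ m+1`, and in that case the unique such `a` is
`(m+1)/3`. -/
theorem twoDigitKaprekar_period_one (m : ℕ) (hm : 2 ≤ m)
    (h : ℕ → ℕ) (hh : ∀ a : ℕ, h a = (2 * (a : ℤ) - (m + 1)).natAbs) :
    ((∃ a : ℕ, 1 ≤ a ∧ a ≤ m ∧ h a = a) ↔ 3 ∣ m + 1) ∧
    (3 ∣ m + 1 → ∀ a : ℕ, 1 ≤ a → a ≤ m → (h a = a ↔ a = (m + 1) / 3)) := by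
  have key : ∀ a : ℕ, a ≤ m → (h a = a ↔ 3 * a = m + 1) := by
    intro a ha
    rw [hh a]
    constructor
    · intro hEq
      have := Int.natAbs_eq_iff.mp hEq
      rcases this with h1 | h1
      · -- 2a - (m+1) = a → a = m+1, contradiction with a ≤ m
        have : (a : ℤ) = m + 1 := by linarith
        have : a = m + 1 := by exact_mod_cast this
        omega
      · have : 3 * (a : ℤ) = m + 1 := by linarith
        exact_mod_cast this
    · intro hEq
      have : 2 * (a : ℤ) - (m + 1) = -(a : ℤ) := by
        have : (3 : ℤ) * a = m + 1 := by exact_mod_cast hEq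
        linarith
      rw [this, Int.natAbs_neg, Int.natAbs_natCast]
  constructor
  · constructor
    · rintro ⟨a, h1, h2, h3⟩
      exact ⟨a, ((key a h2).mp h3).symm⟩
    · rintro ⟨k, hk⟩
      refine ⟨k, ?_, ?_, (key k ?_).mpr (by omega)⟩ <;> omega
  · rintro ⟨k, hk⟩ a h1 h2
    rw [key a h2]
    omega
end

section
/- Let m ≥ 2 be an integer and define h_m : ℕ → ℕ by h_m(a) = |2a − (m+1)|. Then there exists an integer a with 1 ≤ a ≤ m, h_m(h_m(a)) = a and h_m(a) ≠ a if and only if 5 divides m + 1. Moreover, when 5 divides m + 1, the set of such a is exactly {(m+1)/5, 3(m+1)/5}. Hence the two-digit Kaprekar routine in base m has a nontrivial fixed set of cardinality 2 if and only if 5 ∣ m+1, and such a fixed set is unique. -/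
/-- For `m ≥ 2`, with `h_m(a) = |2a - (m+1)|`: there exists `1 ≤ a ≤ m` with
`h_m(h_m(a)) = a` and `h_m(a) ≠ a` iff `5 ∣ m+1`, and in that case the set of
such `a` is exactly `{(m+1)/5, 3(m+1)/5}`. -/
theorem twoDigitKaprekar_period_two (m : ℕ) (hm : 2 ≤ m)
    (h : ℕ → ℕ) (hh : ∀ a : ℕ, h a = (2 * (a : ℤ) - (m + 1)).natAbs) :
    ((∃ a : ℕ, 1 ≤ a ∧ a ≤ m ∧ h (h a) = a ∧ h a ≠ a) ↔ 5 ∣ m + 1) ∧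
    (5 ∣ m + 1 → ∀ a : ℕ, 1 ≤ a → a ≤ m →
      ((h (h a) = a ∧ h a ≠ a) ↔ (a = (m + 1) / 5 ∨ a = 3 * (m + 1) / 5))) := by
  have key : ∀ a : ℕ,
      h (h a) = (2 * (((2 * (a : ℤ) - (m + 1)).natAbs : ℕ) : ℤ) - (m + 1)).natAbs := by
    intro a
    rw [hh, hh]
  constructor
  · constructor
    · rintro ⟨a, h1, h2, h3, h4⟩
      rw [key] at h3
      rw [hh] at h4
      omega
    · intro h5
      refine ⟨(m + 1) / 5, ?_, ?_, ?_, ?_⟩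
      · omega
      · omega
      · rw [key]; omega
      · rw [hh]; omega
  · intro h5 a h1 h2
    rw [key, hh]
    omega
end

section
/- Let m ≥ 2 be an integer, define h_m : ℕ → ℕ by h_m(a) = |2a − (m+1)|, and let t ≥ 1. Then there exists an integer a with 1 ≤ a ≤ m and h_m^[t](a) = a if and only if gcd(m+1, 2^t + 1) > 1 or gcd(m+1, 2^t − 1) > 1. -/
/-- For `m ≥ 2` and `t ≥ 1`, with `h_m(a) = |2a - (m+1)|`: there exists
`1 ≤ a ≤ m` with `h_m^[t](a) = a` iff `gcd(m+1, 2^t+1) > 1` or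
`gcd(m+1, 2^t-1) > 1`. -/
theorem twoDigitKaprekar_period_t (m t : ℕ) (hm : 2 ≤ m) (ht : 1 ≤ t)
    (h : ℕ → ℕ) (hh : ∀ a : ℕ, h a = (2 * (a : ℤ) - (m + 1)).natAbs) :
    (∃ a : ℕ, 1 ≤ a ∧ a ≤ m ∧ h^[t] a = a) ↔
      1 < Nat.gcd (m + 1) (2 ^ t + 1) ∨ 1 < Nat.gcd (m + 1) (2 ^ t - 1) := by
  -- iterate congruence: h^[s] a ≡ ±2^s a (mod m+1)
  have iter : ∀ s a : ℕ, ((m : ℤ) + 1) ∣ (h^[s] a : ℤ) - 2 ^ s * a ∨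
      ((m : ℤ) + 1) ∣ (h^[s] a : ℤ) + 2 ^ s * a := by
    intro s
    induction s with
    | zero => intro a; left; simp
    | succ s ih =>
      intro a
      rw [Function.iterate_succ_apply']
      have E := Int.natAbs_eq (2 * ((h^[s] a : ℕ) : ℤ) - ((m : ℤ) + 1))
      rw [← hh (h^[s] a)] at E
      obtain ⟨k, hk⟩ | ⟨k, hk⟩ := ih a <;> rcases E with E | E
      · left; exact ⟨2 * k - 1, by linear_combination 2 * hk - E⟩
      · right; exact ⟨1 - 2 * k, by linear_combination E - 2 * hk⟩
      · right; exact ⟨2 * k - 1, by linear_combination 2 * hk - E⟩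
      · left; exact ⟨1 - 2 * k, by linear_combination E - 2 * hk⟩
  have h1 : (1 : ℕ) ≤ 2 ^ t := Nat.one_le_two_pow
  constructor
  · rintro ⟨a, ha1, ham, hfix⟩
    by_contra hcon
    push_neg at hcon
    obtain ⟨g1, g2⟩ := hcon
    have c1 : Nat.Coprime (m + 1) (2 ^ t + 1) := by
      have := Nat.gcd_pos_of_pos_left (2 ^ t + 1) (show 0 < m + 1 by omega)
      unfold Nat.Coprime; omega
    have c2 : Nat.Coprime (m + 1) (2 ^ t - 1) := by
      have := Nat.gcd_pos_of_pos_left (2 ^ t - 1) (show 0 < m + 1 by omega)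
      unfold Nat.Coprime; omega
    have hma : m + 1 ∣ a := by
      rcases iter t a with ⟨k, hk⟩ | ⟨k, hk⟩ <;> rw [hfix] at hk
      · refine c2.dvd_of_dvd_mul_left ?_
        have hz : ((m + 1 : ℕ) : ℤ) ∣ (((2 ^ t - 1) * a : ℕ) : ℤ) := by
          rw [Nat.cast_mul, Nat.cast_sub h1]
          push_cast
          exact ⟨-k, by linear_combination -hk⟩
        exact_mod_cast hz
      · refine c1.dvd_of_dvd_mul_left ?_
        have hz : ((m + 1 : ℕ) : ℤ) ∣ (((2 ^ t + 1) * a : ℕ) : ℤ) := by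
          push_cast
          exact ⟨k, by linear_combination hk⟩
        exact_mod_cast hz
    have := Nat.le_of_dvd (by omega) hma
    omega
  · -- constructions
    have bound : ∀ s a, a ≤ m + 1 → h^[s] a ≤ m + 1 := by
      intro s
      induction s with
      | zero => intro a ha; simpa using ha
      | succ s ih =>
        intro a ha
        rw [Function.iterate_succ_apply']
        have hb := ih a ha
        rw [hh]
        omega
    have hsym : ∀ c, c ≤ m + 1 → h (m + 1 - c) = h c := by
      intro c hc
      rw [hh, hh]
      omega
    have key : ∀ c : ℕ, 1 ≤ c → c ≤ m →
        (((m : ℤ) + 1) ∣ 2 ^ t * (c : ℤ) - c ∨ ((m : ℤ) + 1) ∣ 2 ^ t * (c : ℤ) + c) →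
        ∃ a, 1 ≤ a ∧ a ≤ m ∧ h^[t] a = a := by
      intro c hc1 hcm hcong
      have hb : h^[t] c ≤ m + 1 := bound t c (by omega)
      have hHc : ((m : ℤ) + 1) ∣ (h^[t] c : ℤ) - c ∨ ((m : ℤ) + 1) ∣ (h^[t] c : ℤ) + c := by
        rcases iter t c with ⟨k, hk⟩ | ⟨k, hk⟩ <;> rcases hcong with ⟨j, hj⟩ | ⟨j, hj⟩
        · left; exact ⟨k + j, by linear_combination hk + hj⟩
        · right; exact ⟨k + j, by linear_combination hk + hj⟩
        · right; exact ⟨k - j, by linear_combination hk - hj⟩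
        · left; exact ⟨k - j, by linear_combination hk - hj⟩
      rcases hHc with hd | hd
      · -- h^[t] c = c
        have hd2 : (m + 1) ∣ ((h^[t] c : ℤ) - c).natAbs := by
          have h3 := Int.natAbs_dvd_natAbs.mpr hd
          rwa [show ((m : ℤ) + 1).natAbs = m + 1 by omega] at h3
        have h0 := Nat.eq_zero_of_dvd_of_lt hd2 (by omega)
        exact ⟨c, hc1, hcm, by omega⟩
      · -- h^[t] c = m + 1 - c
        have hd2 : (m + 1) ∣ (h^[t] c + c) := by
          have : ((m + 1 : ℕ) : ℤ) ∣ ((h^[t] c + c : ℕ) : ℤ) := by push_cast; exact hd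
          exact_mod_cast this
        have hle : m + 1 ≤ h^[t] c + c := Nat.le_of_dvd (by omega) hd2
        have hd3 : (m + 1) ∣ (h^[t] c + c - (m + 1)) := Nat.dvd_sub hd2 dvd_rfl
        have h0 := Nat.eq_zero_of_dvd_of_lt hd3 (by omega)
        -- so h^[t] c + c = m + 1
        obtain ⟨t', rfl⟩ : ∃ t', t = t' + 1 := ⟨t - 1, by omega⟩
        refine ⟨m + 1 - c, by omega, by omega, ?_⟩
        have e1 : h^[t' + 1] (m + 1 - c) = h^[t' + 1] c := by
          rw [Function.iterate_succ_apply, Function.iterate_succ_apply, hsym c (by omega)]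
        omega
    rintro (hg | hg)
    · set d := Nat.gcd (m + 1) (2 ^ t + 1) with hdd
      have hd1 : d ∣ m + 1 := Nat.gcd_dvd_left _ _
      have hdx : d ∣ 2 ^ t + 1 := Nat.gcd_dvd_right _ _
      have hc1 : 1 ≤ (m + 1) / d := Nat.div_pos (Nat.le_of_dvd (by omega) hd1) (by omega)
      have hcm : (m + 1) / d ≤ m := by
        have h2 : (m + 1) / d ≤ (m + 1) / 2 := Nat.div_le_div_left (by omega) (by norm_num)
        omega
      apply key ((m + 1) / d) hc1 hcm
      right
      have hdvd : (m + 1) ∣ (2 ^ t + 1) * ((m + 1) / d) := by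
        obtain ⟨e, he⟩ := hdx
        exact ⟨e, by rw [he]; rw [show d * e * ((m + 1) / d) = e * (d * ((m + 1) / d)) by ring,
          Nat.mul_div_cancel' hd1]; ring⟩
      rw [show 2 ^ t * (((m + 1) / d : ℕ) : ℤ) + ((m + 1) / d : ℕ) =
        ((2 ^ t : ℤ) + 1) * ((m + 1) / d : ℕ) by ring]
      exact_mod_cast Int.natCast_dvd_natCast.mpr hdvd
    · set d := Nat.gcd (m + 1) (2 ^ t - 1) with hdd
      have hd1 : d ∣ m + 1 := Nat.gcd_dvd_left _ _
      have hdx : d ∣ 2 ^ t - 1 := Nat.gcd_dvd_right _ _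
      have hc1 : 1 ≤ (m + 1) / d := Nat.div_pos (Nat.le_of_dvd (by omega) hd1) (by omega)
      have hcm : (m + 1) / d ≤ m := by
        have h2 : (m + 1) / d ≤ (m + 1) / 2 := Nat.div_le_div_left (by omega) (by norm_num)
        omega
      apply key ((m + 1) / d) hc1 hcm
      left
      have hdvd : (m + 1) ∣ (2 ^ t - 1) * ((m + 1) / d) := by
        obtain ⟨e, he⟩ := hdx
        exact ⟨e, by rw [he]; rw [show d * e * ((m + 1) / d) = e * (d * ((m + 1) / d)) by ring,
          Nat.mul_div_cancel' hd1]; ring⟩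
      have hz := Int.natCast_dvd_natCast.mpr hdvd
      rw [Nat.cast_mul, Nat.cast_sub h1] at hz
      rw [show 2 ^ t * (((m + 1) / d : ℕ) : ℤ) - ((m + 1) / d : ℕ) =
        (((2 ^ t : ℕ) : ℤ) - ((1 : ℕ) : ℤ)) * ((m + 1) / d : ℕ) by push_cast; ring]
      exact_mod_cast hz
end

section
/- Let m ≥ 2 be an integer, define h_m : ℕ → ℕ by h_m(a) = |2a − (m+1)|, and let t ≥ 1. Write d₊ = gcd(m+1, 2^t + 1) and d₋ = gcd(m+1, 2^t − 1). Then the set {a : 1 ≤ a ≤ m and h_m^[t](a) = a} is equal to the union of { ξ₁·(m+1)/d₊ : ξ₁ odd, 1 ≤ ξ₁ < d₊ } and { ξ₂·(m+1)/d₋ : ξ₂ odd, 1 ≤ ξ₂ < d₋ }. -/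
private lemma step_lemma (m : ℕ) (h : ℕ → ℕ)
    (hh : ∀ a : ℕ, h a = (2 * (a : ℤ) - (m + 1)).natAbs) :
    ∀ b : ℕ, b ≤ m + 1 → ((h b : ℤ) = |2 * (b : ℤ) - (m + 1)| ∧ h b ≤ m + 1) := by
  intro b hb
  have h1 : (h b : ℤ) = |2 * (b : ℤ) - (m + 1)| := by
    rw [hh b, Int.natCast_natAbs]
  refine ⟨h1, ?_⟩
  rcases abs_cases (2 * (b : ℤ) - (m + 1)) with ⟨he, _⟩ | ⟨he, _⟩ <;>
    · rw [he] at h1; omega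

private lemma iter_lemma (m : ℕ) (h : ℕ → ℕ)
    (hh : ∀ a : ℕ, h a = (2 * (a : ℤ) - (m + 1)).natAbs) :
    ∀ t, 1 ≤ t → ∀ a : ℕ, a ≤ m + 1 →
      ∃ k : ℤ, Odd k ∧ (h^[t] a : ℤ) = |2 ^ t * (a : ℤ) - k * (m + 1)| ∧ h^[t] a ≤ m + 1 := by
  intro t ht
  induction t, ht using Nat.le_induction with
  | base =>
    intro a ha
    obtain ⟨h1, h2⟩ := step_lemma m h hh a ha
    refine ⟨1, odd_one, ?_, by simpa using h2⟩
    simpa using h1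
  | succ t ht ih =>
    intro a ha
    obtain ⟨k, hk, hfk, hbk⟩ := ih a ha
    obtain ⟨h1, h2⟩ := step_lemma m h hh (h^[t] a) hbk
    rw [Function.iterate_succ_apply']
    rcases abs_cases (2 ^ t * (a : ℤ) - k * (m + 1)) with ⟨he, _⟩ | ⟨he, _⟩
    · refine ⟨2 * k + 1, odd_two_mul_add_one k, ?_, h2⟩
      rw [h1, hfk, he]
      congr 1; ring
    · refine ⟨2 * k - 1, ⟨k - 1, by ring⟩, ?_, h2⟩
      rw [h1, hfk, he]
      rw [show 2 * -(2 ^ t * (a : ℤ) - k * (m + 1)) - (m + 1)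
            = -(2 ^ (t + 1) * (a : ℤ) - (2 * k - 1) * (m + 1)) by ring, abs_neg]

private lemma div_char (m c a : ℕ) (hm : 2 ≤ m) (hc : Odd c) :
    ((1 ≤ a ∧ a ≤ m) ∧ ∃ k : ℕ, Odd k ∧ c * a = k * (m + 1)) ↔
    ∃ ξ : ℕ, Odd ξ ∧ 1 ≤ ξ ∧ ξ < Nat.gcd (m + 1) c ∧ a = ξ * ((m + 1) / Nat.gcd (m + 1) c) := by
  set d := Nat.gcd (m + 1) c with hd
  have hd1 : d ∣ m + 1 := Nat.gcd_dvd_left _ _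
  have hd2 : d ∣ c := Nat.gcd_dvd_right _ _
  have hdpos : 0 < d := Nat.gcd_pos_of_pos_left _ (by omega)
  obtain ⟨g, hg⟩ := hd1
  obtain ⟨c', hc'⟩ := hd2
  have hgeq : (m + 1) / d = g := by rw [hg]; exact Nat.mul_div_cancel_left _ hdpos
  have hgpos : 0 < g := by
    rcases Nat.eq_zero_or_pos g with h0 | h0
    · subst h0; simp at hg
    · exact h0
  have hcop : Nat.Coprime g c' := by
    have h0 := Nat.coprime_div_gcd_div_gcd (m := m + 1) (n := c) hdpos
    have e1 : (m + 1) / d = g := hgeq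
    have e2 : c / d = c' := by rw [hc']; exact Nat.mul_div_cancel_left _ hdpos
    rwa [← hd, e1, e2] at h0
  have hc'odd : Odd c' := by
    rw [hc', Nat.odd_mul] at hc; exact hc.2
  constructor
  · rintro ⟨⟨ha1, ha2⟩, k, hk, hke⟩
    have hdvd : g ∣ a := by
      have hstep : d * g ∣ d * (c' * a) := by
        rw [← mul_assoc, ← hc', ← hg]
        exact ⟨k, by rw [hke]; ring⟩
      have h1 : g ∣ c' * a := (mul_dvd_mul_iff_left (by omega : d ≠ 0)).mp hstep
      exact (Nat.Coprime.dvd_of_dvd_mul_left hcop h1)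
    obtain ⟨ξ, hξ0⟩ := hdvd
    have hξ : a = ξ * g := by rw [hξ0, mul_comm]
    have hkval : k = c' * ξ := by
      have h2 : k * (m + 1) = (c' * ξ) * (m + 1) := by
        calc k * (m + 1) = c * a := hke.symm
          _ = (d * c') * (ξ * g) := by rw [hc', hξ]
          _ = (c' * ξ) * (d * g) := by ring
          _ = (c' * ξ) * (m + 1) := by rw [← hg]
      exact Nat.eq_of_mul_eq_mul_right (by omega) h2
    have hξodd : Odd ξ := by
      rw [hkval, Nat.odd_mul] at hk; exact hk.2
    have hξ1 : 1 ≤ ξ := by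
      rcases Nat.eq_zero_or_pos ξ with h0 | h0
      · subst h0; simp at hξ; omega
      · exact h0
    refine ⟨ξ, hξodd, hξ1, ?_, by rw [hgeq]; exact hξ⟩
    by_contra hcon
    push_neg at hcon
    have hmul : d * g ≤ ξ * g := Nat.mul_le_mul_right _ hcon
    have : ξ * g ≤ m := by omega
    linarith
  · rintro ⟨ξ, hξodd, hξ1, hξd, rfl⟩
    rw [hgeq]
    have hle : (ξ + 1) * g ≤ d * g := Nat.mul_le_mul_right _ (by omega)
    rw [add_mul, one_mul] at hle
    refine ⟨⟨?_, ?_⟩, c' * ξ, Nat.odd_mul.mpr ⟨hc'odd, hξodd⟩, ?_⟩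
    · exact Nat.mul_pos hξ1 hgpos
    · linarith
    · rw [hc', hg]; ring

/-- For `m ≥ 2` and `t ≥ 1`, with `h_m(a) = |2a - (m+1)|`, `d₊ = gcd(m+1, 2^t+1)`
and `d₋ = gcd(m+1, 2^t-1)`: the set of solutions `1 ≤ a ≤ m` of `h_m^[t](a) = a`
is exactly `{ξ₁(m+1)/d₊ : ξ₁ odd, 1 ≤ ξ₁ < d₊} ∪ {ξ₂(m+1)/d₋ : ξ₂ odd, 1 ≤ ξ₂ < d₋}`. -/
theorem twoDigitKaprekar_period_t_solution_set (m t : ℕ) (hm : 2 ≤ m) (ht : 1 ≤ t)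
    (h : ℕ → ℕ) (hh : ∀ a : ℕ, h a = (2 * (a : ℤ) - (m + 1)).natAbs) :
    {a : ℕ | 1 ≤ a ∧ a ≤ m ∧ h^[t] a = a} =
      {a : ℕ | ∃ ξ₁ : ℕ, Odd ξ₁ ∧ 1 ≤ ξ₁ ∧ ξ₁ < Nat.gcd (m + 1) (2 ^ t + 1) ∧
          a = ξ₁ * ((m + 1) / Nat.gcd (m + 1) (2 ^ t + 1))} ∪
        {a : ℕ | ∃ ξ₂ : ℕ, Odd ξ₂ ∧ 1 ≤ ξ₂ ∧ ξ₂ < Nat.gcd (m + 1) (2 ^ t - 1) ∧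
          a = ξ₂ * ((m + 1) / Nat.gcd (m + 1) (2 ^ t - 1))} := by
  have h2t : 1 ≤ 2 ^ t := Nat.one_le_two_pow
  have hdvd2 : (2 : ℕ) ∣ 2 ^ t := dvd_pow_self 2 (by omega)
  obtain ⟨s, hs⟩ := hdvd2
  have hop : Odd (2 ^ t + 1) := by rw [Nat.odd_iff]; omega
  have hom : Odd (2 ^ t - 1) := by rw [Nat.odd_iff]; omega
  have hcast : ((2 ^ t - 1 : ℕ) : ℤ) = 2 ^ t - 1 := by
    rw [Nat.cast_sub h2t]; push_cast; ring
  ext a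
  simp only [Set.mem_setOf_eq, Set.mem_union]
  rw [← div_char m (2 ^ t + 1) a hm hop, ← div_char m (2 ^ t - 1) a hm hom]
  constructor
  · rintro ⟨ha1, ha2, hfix⟩
    obtain ⟨k, hk, hform, hb⟩ := iter_lemma m h hh t ht a (by omega)
    rw [hfix] at hform
    have h2p : (2 : ℤ) ≤ 2 ^ t := by
      have hn : (2 : ℕ) ≤ 2 ^ t := by omega
      exact_mod_cast hn
    rcases abs_cases (2 ^ t * (a : ℤ) - k * (m + 1)) with ⟨he, _⟩ | ⟨he, _⟩
    · -- |x| = x : (2^t - 1) a = k (m+1), minus case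
      right
      have heq : ((2 : ℤ) ^ t - 1) * a = k * (m + 1) := by
        rw [he] at hform; linarith
      have h1 : (0 : ℤ) ≤ k * (m + 1) := by
        rw [← heq]
        have : (0 : ℤ) ≤ (a : ℤ) := by positivity
        nlinarith
      have hk0 : 0 ≤ k := by
        by_contra hneg
        push_neg at hneg
        nlinarith
      lift k to ℕ using hk0 with k' hk'
      refine ⟨⟨ha1, ha2⟩, k', by exact_mod_cast hk, ?_⟩
      have : ((2 ^ t - 1 : ℕ) : ℤ) * a = (k' : ℤ) * (m + 1) := by rw [hcast]; exact heq
      exact_mod_cast this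
    · -- |x| = -x : (2^t + 1) a = k (m+1), plus case
      left
      have heq : ((2 : ℤ) ^ t + 1) * a = k * (m + 1) := by
        rw [he] at hform; linarith
      have h1 : (0 : ℤ) ≤ k * (m + 1) := by
        rw [← heq]; positivity
      have hk0 : 0 ≤ k := by
        by_contra hneg
        push_neg at hneg
        nlinarith
      lift k to ℕ using hk0 with k' hk'
      refine ⟨⟨ha1, ha2⟩, k', by exact_mod_cast hk, ?_⟩
      exact_mod_cast heq
  · have main : ∀ k : ℕ, Odd k → |2 ^ t * (a : ℤ) - k * (m + 1)| = a →
        1 ≤ a → a ≤ m → h^[t] a = a := by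
      intro k hk habs ha1 ha2
      obtain ⟨k₁, hk₁, hform, hb⟩ := iter_lemma m h hh t ht a (by omega)
      have haz : ((a : ℤ)) ≤ (m : ℤ) := by exact_mod_cast ha2
      have hkk : k₁ = (k : ℤ) := by
        by_contra hne
        have heven : Even (k₁ - (k : ℤ)) := Odd.sub_odd hk₁ (by exact_mod_cast hk)
        obtain ⟨c, hcc⟩ := heven
        have h2le : 2 ≤ |k₁ - (k : ℤ)| := by
          rcases abs_cases (k₁ - (k : ℤ)) with ⟨hq, _⟩ | ⟨hq, _⟩ <;> omega
        have tri : |(k₁ - (k : ℤ)) * ((m : ℤ) + 1)| ≤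
            |2 ^ t * (a : ℤ) - k₁ * (m + 1)| + |2 ^ t * (a : ℤ) - k * (m + 1)| := by
          have h3 := abs_sub (2 ^ t * (a : ℤ) - k₁ * ((m : ℤ) + 1))
            (2 ^ t * (a : ℤ) - k * ((m : ℤ) + 1))
          rw [show (2 ^ t * (a : ℤ) - k₁ * ((m : ℤ) + 1)) -
              (2 ^ t * (a : ℤ) - k * ((m : ℤ) + 1)) = -((k₁ - (k : ℤ)) * ((m : ℤ) + 1)) by
            ring, abs_neg] at h3
          linarith
        rw [abs_mul, habs] at tri
        have hf2 : |2 ^ t * (a : ℤ) - k₁ * ((m : ℤ) + 1)| ≤ (m : ℤ) + 1 := by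
          rw [← hform]; exact_mod_cast hb
        have hlow : 2 * ((m : ℤ) + 1) ≤ |k₁ - (k : ℤ)| * |(m : ℤ) + 1| := by
          rw [abs_of_nonneg (by positivity : (0 : ℤ) ≤ (m : ℤ) + 1)]
          exact mul_le_mul_of_nonneg_right h2le (by positivity)
        linarith
      rw [hkk, habs] at hform
      exact_mod_cast hform
    rintro (⟨⟨ha1, ha2⟩, k, hk, hke⟩ | ⟨⟨ha1, ha2⟩, k, hk, hke⟩)
    · -- plus case
      have heqZ : ((2 : ℤ) ^ t + 1) * a = k * (m + 1) := by exact_mod_cast hke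
      have habs : |2 ^ t * (a : ℤ) - k * (m + 1)| = a := by
        rw [show 2 ^ t * (a : ℤ) - k * (m + 1) = -(a : ℤ) by linarith, abs_neg,
          abs_of_nonneg (by positivity : (0 : ℤ) ≤ (a : ℤ))]
      exact ⟨ha1, ha2, main k hk habs ha1 ha2⟩
    · -- minus case
      have heqZ : ((2 : ℤ) ^ t - 1) * a = k * (m + 1) := by
        have h' : ((2 ^ t - 1 : ℕ) : ℤ) * a = (k : ℤ) * (m + 1) := by exact_mod_cast hke
        rwa [hcast] at h'
      have habs : |2 ^ t * (a : ℤ) - k * (m + 1)| = a := by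
        rw [show 2 ^ t * (a : ℤ) - k * (m + 1) = (a : ℤ) by linarith,
          abs_of_nonneg (by positivity : (0 : ℤ) ≤ (a : ℤ))]
      exact ⟨ha1, ha2, main k hk habs ha1 ha2⟩
end

section
/- Let m ≥ 2 be an integer, define h_m : ℕ → ℕ by h_m(a) = |2a − (m+1)|, and let t ≥ 1. Then there exists an integer a with 1 ≤ a ≤ m such that h_m^[t](a) = a and h_m^[s](a) ≠ a for all s with 1 ≤ s < t (i.e., a has minimal period exactly t) if and only if there exists a divisor d of m+1 with d > 1 such that t is the smallest positive integer satisfying d ∣ 2^t + 1 or d ∣ 2^t − 1 (that is, d ∣ 2^t + 1 or d ∣ 2^t − 1, and for all s with 1 ≤ s < t, d ∤ 2^s + 1 and d ∤ 2^s − 1). -/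
set_option linter.unusedTactic false
set_option linter.unusedVariables false


lemma natAbs_pm (y : ℤ) : ∃ δ : ℤ, (δ = 1 ∨ δ = -1) ∧ (y.natAbs : ℤ) = δ * y := by
  rcases Int.natAbs_eq y with h | h
  · exact ⟨1, Or.inl rfl, by omega⟩
  · exact ⟨-1, Or.inr rfl, by omega⟩

lemma kap_sign (M : ℕ) (h : ℕ → ℕ) (hh : ∀ a : ℕ, h a = (2 * (a:ℤ) - M).natAbs) (s a : ℕ) :
    ∃ ε : ℤ, (ε = 1 ∨ ε = -1) ∧ (M:ℤ) ∣ (h^[s] a : ℤ) - ε * 2^s * a := by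
  induction s with
  | zero => exact ⟨1, Or.inl rfl, by simp⟩
  | succ n ih =>
    obtain ⟨ε, hε, hdvd⟩ := ih
    obtain ⟨δ, hδ, hy⟩ := natAbs_pm (2 * ((h^[n] a : ℕ):ℤ) - M)
    refine ⟨δ * ε, by rcases hδ with rfl|rfl <;> rcases hε with rfl|rfl <;> norm_num, ?_⟩
    rw [Function.iterate_succ_apply', hh, hy]
    have key : δ * (2 * ((h^[n] a : ℕ):ℤ) - M) - δ * ε * 2^(n+1) * a
        = δ * 2 * (((h^[n] a : ℕ):ℤ) - ε * 2^n * a) - δ * M := by ring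
    rw [key]
    exact dvd_sub (Dvd.dvd.mul_left hdvd _) (Dvd.dvd.mul_left dvd_rfl δ)

lemma kap_bound (M : ℕ) (h : ℕ → ℕ) (hh : ∀ a : ℕ, h a = (2 * (a:ℤ) - M).natAbs) (s : ℕ) :
    ∀ a : ℕ, a ≤ M → h^[s] a ≤ M := by
  induction s with
  | zero => simp
  | succ n ih =>
    intro a ha
    rw [Function.iterate_succ_apply]
    apply ih
    have := hh a
    omega

lemma kap_fold (M : ℕ) (h : ℕ → ℕ) (hh : ∀ a : ℕ, h a = (2 * (a:ℤ) - M).natAbs)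
    (a : ℕ) (ha : a ≤ M) : h (M - a) = h a := by
  rw [hh, hh]
  have h1 : ((M - a : ℕ) : ℤ) = (M:ℤ) - a := by push_cast [ha]; ring
  rw [h1, show 2*((M:ℤ) - a) - M = -(2*a - M) by ring, Int.natAbs_neg]

lemma kap_fold_iter (M : ℕ) (h : ℕ → ℕ) (hh : ∀ a : ℕ, h a = (2 * (a:ℤ) - M).natAbs)
    (a k : ℕ) (ha : a ≤ M) (hk : 1 ≤ k) : h^[k] (M - a) = h^[k] a := by
  obtain ⟨k', rfl⟩ : ∃ k', k = k' + 1 := ⟨k - 1, by omega⟩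
  rw [Function.iterate_succ_apply, Function.iterate_succ_apply, kap_fold M h hh a ha]

lemma kap_rep (M a x : ℕ) (ha1 : 1 ≤ a) (ha2 : a < M) (hx : x ≤ M) (ε : ℤ)
    (hε : ε = 1 ∨ ε = -1) (hd : (M:ℤ) ∣ (x:ℤ) - ε * a) : x = a ∨ x = M - a := by
  rcases hε with rfl | rfl
  · left
    have h0 : (x:ℤ) - 1 * a = 0 := by
      refine Int.eq_zero_of_abs_lt_dvd hd ?_
      rw [abs_lt]; constructor <;> push_cast <;> omega
    omega
  · right
    have hd2 : (M:ℤ) ∣ ((x:ℤ) + a - M) := by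
      have : (x:ℤ) + a - M = ((x:ℤ) - (-1) * a) - M := by ring
      rw [this]; exact dvd_sub hd dvd_rfl
    have h0 : (x:ℤ) + a - M = 0 := by
      refine Int.eq_zero_of_abs_lt_dvd hd2 ?_
      rw [abs_lt]; constructor <;> push_cast <;> omega
    omega

lemma kap_cong_of_eq (M : ℕ) (h : ℕ → ℕ) (hh : ∀ a : ℕ, h a = (2 * (a:ℤ) - M).natAbs)
    {a s : ℕ} (ha2 : a < M)
    (hx : h^[s] a = a ∨ h^[s] a = M - a) :
    (M:ℤ) ∣ (a:ℤ) * (2^s + 1) ∨ (M:ℤ) ∣ (a:ℤ) * (2^s - 1) := by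
  obtain ⟨ε, hε, hdvd⟩ := kap_sign M h hh s a
  have hε0 : ∃ ε₀ : ℤ, (ε₀ = 1 ∨ ε₀ = -1) ∧ (M:ℤ) ∣ ((h^[s] a : ℕ):ℤ) - ε₀ * a := by
    rcases hx with hx | hx
    · exact ⟨1, Or.inl rfl, by rw [hx]; simp⟩
    · refine ⟨-1, Or.inr rfl, ?_⟩
      have : ((h^[s] a : ℕ):ℤ) - (-1) * a = M := by rw [hx]; push_cast [le_of_lt ha2]; ring
      rw [this]
  obtain ⟨ε₀, hε₀, hdvd₀⟩ := hε0
  have hkey : (M:ℤ) ∣ (a:ℤ) * (2^s - ε * ε₀) := by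
    have h1 : (M:ℤ) ∣ (ε₀ * a - ε * 2^s * a) := by
      have := dvd_sub hdvd₀ hdvd
      have e : (((h^[s] a : ℕ):ℤ) - ε₀ * a) - (((h^[s] a : ℕ):ℤ) - ε * 2^s * a)
          = -(ε₀ * a - ε * 2^s * a) := by ring
      rw [e] at this
      exact (dvd_neg.mp this)
    have h2 : (M:ℤ) ∣ ε * (ε₀ * a - ε * 2^s * a) := Dvd.dvd.mul_left h1 ε
    have e2 : ε * (ε₀ * (a:ℤ) - ε * 2^s * a) = -((a:ℤ) * (2^s - ε * ε₀)) := by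
      rcases hε with rfl | rfl <;> ring
    rw [e2] at h2
    exact dvd_neg.mp h2
  rcases hε with rfl | rfl <;> rcases hε₀ with rfl | rfl
  · right; simpa using hkey
  · left; have e : (a:ℤ) * (2^s - 1 * (-1)) = (a:ℤ) * (2^s + 1) := by ring
    rwa [e] at hkey
  · left; have e : (a:ℤ) * (2^s - (-1) * 1) = (a:ℤ) * (2^s + 1) := by ring
    rwa [e] at hkey
  · right; have e : (a:ℤ) * (2^s - (-1) * (-1)) = (a:ℤ) * (2^s - 1) := by ring
    rwa [e] at hkey

lemma kap_eq_of_cong (M : ℕ) (h : ℕ → ℕ) (hh : ∀ a : ℕ, h a = (2 * (a:ℤ) - M).natAbs)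
    {a s : ℕ} (ha1 : 1 ≤ a) (ha2 : a < M)
    (hc : (M:ℤ) ∣ (a:ℤ) * (2^s + 1) ∨ (M:ℤ) ∣ (a:ℤ) * (2^s - 1)) :
    h^[s] a = a ∨ h^[s] a = M - a := by
  obtain ⟨ε, hε, hdvd⟩ := kap_sign M h hh s a
  have hε0 : ∃ ε₀ : ℤ, (ε₀ = 1 ∨ ε₀ = -1) ∧ (M:ℤ) ∣ (a:ℤ) * (2^s - ε₀) := by
    rcases hc with hc | hc
    · exact ⟨-1, Or.inr rfl, by have e : (a:ℤ) * (2^s - (-1)) = (a:ℤ) * (2^s + 1) := by ring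
                                rwa [e]⟩
    · exact ⟨1, Or.inl rfl, hc⟩
  obtain ⟨ε₀, hε₀, hdvd₀⟩ := hε0
  have hkey : (M:ℤ) ∣ ((h^[s] a : ℕ):ℤ) - (ε * ε₀) * a := by
    have h2 : (M:ℤ) ∣ ε * ((a:ℤ) * (2^s - ε₀)) := Dvd.dvd.mul_left hdvd₀ ε
    have e : ((h^[s] a : ℕ):ℤ) - (ε * ε₀) * a
        = (((h^[s] a : ℕ):ℤ) - ε * 2^s * a) + ε * ((a:ℤ) * (2^s - ε₀)) := by ring
    rw [e]
    exact dvd_add hdvd h2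
  exact kap_rep M a (h^[s] a) ha1 ha2 (kap_bound M h hh s a (le_of_lt ha2)) (ε * ε₀)
    (by rcases hε with rfl|rfl <;> rcases hε₀ with rfl|rfl <;> norm_num) hkey

lemma kap_cast_bridge (M a s : ℕ) (hs : 1 ≤ s) :
    ((M:ℤ) ∣ (a:ℤ)*(2^s+1) ∨ (M:ℤ) ∣ (a:ℤ)*(2^s-1)) ↔ (M ∣ a*(2^s+1) ∨ M ∣ a*(2^s-1)) := by
  have h2 : 1 ≤ 2^s := Nat.one_le_two_pow
  have e1 : ((a*(2^s+1) : ℕ) : ℤ) = (a:ℤ)*(2^s+1) := by push_cast; ring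
  have e2 : ((a*(2^s-1) : ℕ) : ℤ) = (a:ℤ)*(2^s-1) := by push_cast [h2]; ring
  rw [← e1, ← e2, Int.natCast_dvd_natCast, Int.natCast_dvd_natCast]


lemma kap_dvd_transfer (M a : ℕ) (ha : 1 ≤ a) (hM : 0 < M) (k : ℕ) :
    (M ∣ a * k) ↔ ((M / Nat.gcd a M) ∣ k) := by
  set g := Nat.gcd a M with hg
  have hgpos : 0 < g := Nat.gcd_pos_of_pos_left _ ha
  have hgM : g ∣ M := Nat.gcd_dvd_right a M
  have hga : g ∣ a := Nat.gcd_dvd_left a M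
  constructor
  · intro hMk
    have hco : Nat.Coprime (a / g) (M / g) := Nat.coprime_div_gcd_div_gcd hgpos
    have h1 : g * (M / g) ∣ g * ((a / g) * k) := by
      rw [Nat.mul_div_cancel' hgM, ← Nat.mul_assoc, Nat.mul_div_cancel' hga]
      exact hMk
    have h2 : (M / g) ∣ (a / g) * k := (Nat.mul_dvd_mul_iff_left hgpos).mp h1
    exact (Nat.Coprime.dvd_of_dvd_mul_left hco.symm h2)
  · intro hdk
    have h1 : g * (M / g) ∣ a * k := mul_dvd_mul hga hdk
    rwa [Nat.mul_div_cancel' hgM] at h1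

/-- For `m ≥ 2` and `t ≥ 1`, with `h_m(a) = |2a - (m+1)|`: there exists
`1 ≤ a ≤ m` of minimal period exactly `t` under `h_m` iff there is a divisor
`d > 1` of `m+1` such that `t` is the smallest positive integer with
`d ∣ 2^t + 1` or `d ∣ 2^t - 1`. -/
theorem twoDigitKaprekar_minimal_period (m t : ℕ) (hm : 2 ≤ m) (ht : 1 ≤ t)
    (h : ℕ → ℕ) (hh : ∀ a : ℕ, h a = (2 * (a : ℤ) - (m + 1)).natAbs) :
    (∃ a : ℕ, 1 ≤ a ∧ a ≤ m ∧ h^[t] a = a ∧ ∀ s : ℕ, 1 ≤ s → s < t → h^[s] a ≠ a) ↔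
      (∃ d : ℕ, d ∣ m + 1 ∧ 1 < d ∧ (d ∣ 2 ^ t + 1 ∨ d ∣ 2 ^ t - 1) ∧
        ∀ s : ℕ, 1 ≤ s → s < t → ¬d ∣ 2 ^ s + 1 ∧ ¬d ∣ 2 ^ s - 1) := by
  set M := m + 1 with hMdef
  have hh' : ∀ a : ℕ, h a = (2 * (a:ℤ) - (M:ℕ)).natAbs := by
    intro a; rw [hh]; congr 1
  have hMpos : 0 < M := by omega
  constructor
  · rintro ⟨a, ha1, ha2, hper, hmin⟩
    have haM : a < M := by omega
    set g := Nat.gcd a M with hgdef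
    set d := M / g with hddef
    have hgM : g ∣ M := Nat.gcd_dvd_right a M
    have hga : g ∣ a := Nat.gcd_dvd_left a M
    have hgpos : 0 < g := Nat.gcd_pos_of_pos_left _ ha1
    have hgd : g * d = M := Nat.mul_div_cancel' hgM
    have hdM : d ∣ M := Nat.div_dvd_of_dvd hgM
    have hga' : g ≤ a := Nat.le_of_dvd ha1 hga
    have hd1 : 1 < d := by
      rcases Nat.lt_or_ge 1 d with h1 | h1
      · exact h1
      · exfalso
        interval_cases d <;> omega
    refine ⟨d, hdM, hd1, ?_, ?_⟩
    · have hc := kap_cong_of_eq M h hh' haM (Or.inl hper)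
      have hc' := (kap_cast_bridge M a t ht).mp hc
      rcases hc' with hc' | hc'
      · exact Or.inl ((kap_dvd_transfer M a ha1 hMpos _).mp hc')
      · exact Or.inr ((kap_dvd_transfer M a ha1 hMpos _).mp hc')
    · intro s hs1 hs2
      have key : ∀ k : ℕ, (k = 2^s + 1 ∨ k = 2^s - 1) → ¬ d ∣ k := by
        intro k hk hdk
        have hMak : M ∣ a * k := (kap_dvd_transfer M a ha1 hMpos k).mpr hdk
        have hc : (M:ℤ) ∣ (a:ℤ)*(2^s+1) ∨ (M:ℤ) ∣ (a:ℤ)*(2^s-1) := by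
          apply (kap_cast_bridge M a s hs1).mpr
          rcases hk with rfl | rfl
          · exact Or.inl hMak
          · exact Or.inr hMak
        rcases kap_eq_of_cong M h hh' ha1 haM hc with heq | heq
        · exact hmin s hs1 hs2 heq
        · -- h^[s] a = M - a, fold
          have e1 : h^[t] a = h^[t - s] (h^[s] a) := by
            rw [← Function.iterate_add_apply, Nat.sub_add_cancel (le_of_lt hs2)]
          rw [heq, kap_fold_iter M h hh' a (t - s) (le_of_lt haM) (by omega)] at e1
          exact hmin (t - s) (by omega) (by omega) (by rw [← e1, hper])
      exact ⟨key _ (Or.inl rfl), key _ (Or.inr rfl)⟩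
  · rintro ⟨d, hdM, hd1, hdt, hdmin⟩
    set a := M / d with hadef
    have had : a * d = M := Nat.div_mul_cancel hdM
    have ha1 : 1 ≤ a := Nat.div_pos (Nat.le_of_dvd hMpos hdM) (by omega)
    have haM : a < M := by
      have h2 : a * 2 ≤ a * d := Nat.mul_le_mul_left a hd1
      omega
    have htrans : ∀ k : ℕ, (M ∣ a * k) ↔ (d ∣ k) := by
      intro k
      have hgeq : Nat.gcd a M = a := Nat.gcd_eq_left ⟨d, had.symm⟩
      have hdiv : M / a = d := by
        rw [← had, Nat.mul_div_cancel_left _ (by omega : 0 < a)]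
      rw [kap_dvd_transfer M a ha1 hMpos k, hgeq, hdiv]
    have hnots : ∀ s : ℕ, 1 ≤ s → s < t → ¬ (h^[s] a = a ∨ h^[s] a = M - a) := by
      intro s hs1 hs2 hx
      have hc := (kap_cast_bridge M a s hs1).mp (kap_cong_of_eq M h hh' haM hx)
      rcases hc with hc | hc
      · exact (hdmin s hs1 hs2).1 ((htrans _).mp hc)
      · exact (hdmin s hs1 hs2).2 ((htrans _).mp hc)
    have hct : (M:ℤ) ∣ (a:ℤ)*(2^t+1) ∨ (M:ℤ) ∣ (a:ℤ)*(2^t-1) := by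
      apply (kap_cast_bridge M a t ht).mpr
      rcases hdt with hdt | hdt
      · exact Or.inl ((htrans _).mpr hdt)
      · exact Or.inr ((htrans _).mpr hdt)
    rcases kap_eq_of_cong M h hh' ha1 haM hct with hper | hper
    · refine ⟨a, ha1, by omega, hper, ?_⟩
      intro s hs1 hs2 heq
      exact hnots s hs1 hs2 (Or.inl heq)
    · refine ⟨M - a, by omega, by omega, ?_, ?_⟩
      · rw [kap_fold_iter M h hh' a t (le_of_lt haM) ht, hper]
      · intro s hs1 hs2 heq
        rw [kap_fold_iter M h hh' a s (le_of_lt haM) hs1] at heq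
        exact hnots s hs1 hs2 (Or.inr heq)
end

section
/- Let m₁ ≥ 2 and m₂ ≥ 2 be integers such that m₁ + 1 and m₂ + 1 have the same largest odd divisor (i.e., they differ only in their power-of-2 factor). Then for every t ≥ 1, there exists a with 1 ≤ a ≤ m₁ and h_{m₁}^[t](a) = a if and only if there exists a with 1 ≤ a ≤ m₂ and h_{m₂}^[t](a) = a. In other words, the number of 2-factors of m+1 has no influence on the set of periods of the two-digit Kaprekar routine in base m. -/
/-- Key reduction: periodic points of `h_m` in `[1,m]`, where `m+1 = 2^r k`,
correspond exactly to periodic points of `b ↦ |2b - k|` in `[1, k-1]`. -/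
lemma twoDigitKaprekar_key (m k r : ℕ) (hN : m + 1 = 2 ^ r * k)
    (h : ℕ → ℕ) (hh : ∀ a : ℕ, h a = (2 * (a : ℤ) - (m + 1)).natAbs)
    (t : ℕ) (ht : 1 ≤ t) :
    (∃ a : ℕ, 1 ≤ a ∧ a ≤ m ∧ h^[t] a = a) ↔
    (∃ b : ℕ, 1 ≤ b ∧ b ≤ k - 1 ∧
      (fun b : ℕ => (2 * (b : ℤ) - k).natAbs)^[t] b = b) := by
  set g : ℕ → ℕ := fun b : ℕ => (2 * (b : ℤ) - k).natAbs with hg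
  have hp : 0 < 2 ^ r := Nat.pow_pos (by norm_num)
  have hmk : ((m : ℤ) + 1) = 2 ^ r * k := by exact_mod_cast hN
  -- scaling lemma
  have scale : ∀ x : ℕ, h (2 ^ r * x) = 2 ^ r * g x := by
    intro x
    have e : (2 * ((2 ^ r * x : ℕ) : ℤ) - ((m : ℤ) + 1))
        = 2 ^ r * (2 * (x : ℤ) - k) := by
      rw [hmk]; push_cast; ring
    rw [hh, e, Int.natAbs_mul]
    simp [hg, Int.natAbs_pow]
  have iter_scale : ∀ n x : ℕ, h^[n] (2 ^ r * x) = 2 ^ r * g^[n] x := by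
    intro n
    induction n with
    | zero => simp
    | succ n ih =>
      intro x
      rw [Function.iterate_succ_apply', Function.iterate_succ_apply', ih, scale]
  constructor
  · rintro ⟨a, ha1, ham, hfix⟩
    -- step: 2-adic divisibility grows
    have step : ∀ x s : ℕ, 2 ^ s ∣ x → 2 ^ (min (s + 1) r) ∣ h x := by
      intro x s hsx
      set u := min (s + 1) r with hu
      have h1 : ((2 : ℤ) ^ u) ∣ 2 * (x : ℤ) := by
        have : (2 : ℕ) ^ u ∣ 2 * x := by
          calc (2 : ℕ) ^ u ∣ 2 ^ (s + 1) := pow_dvd_pow 2 (min_le_left _ _)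
            _ = 2 * 2 ^ s := by ring
            _ ∣ 2 * x := mul_dvd_mul_left 2 hsx
        exact_mod_cast Int.natCast_dvd_natCast.mpr this
      have h2 : ((2 : ℤ) ^ u) ∣ ((m : ℤ) + 1) := by
        rw [hmk]
        exact dvd_mul_of_dvd_left (pow_dvd_pow (2 : ℤ) (min_le_right _ _)) _
      have h3 : ((2 : ℤ) ^ u) ∣ (2 * (x : ℤ) - ((m : ℤ) + 1)) := dvd_sub h1 h2
      rw [hh, show (2 : ℕ) ^ u = ((2 : ℤ) ^ u).natAbs by simp [Int.natAbs_pow]]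
      exact Int.natAbs_dvd_natAbs.mpr h3
    have main : ∀ i : ℕ, 2 ^ (min i r) ∣ h^[i] a := by
      intro i
      induction i with
      | zero => simp
      | succ n ih =>
        have hs := step _ (min n r) ih
        rw [Function.iterate_succ_apply']
        have hmin : min (n + 1) r = min (min n r + 1) r := by omega
        rwa [hmin]
    have hfixtr : h^[t * r] a = a := by
      rw [Function.iterate_mul]
      exact Function.iterate_fixed hfix r
    have hra : 2 ^ r ∣ a := by
      have := main (t * r)
      rw [hfixtr] at this
      have hle : r ≤ t * r := Nat.le_mul_of_pos_left r ht
      rwa [min_eq_right hle] at this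
    obtain ⟨b, rfl⟩ := hra
    refine ⟨b, ?_, ?_, ?_⟩
    · by_contra hb
      push_neg at hb
      interval_cases b
      simp at ha1
    · -- 2^r * b ≤ m = 2^r*k - 1  ⇒ b < k ⇒ b ≤ k-1
      have hbk : b < k := by
        by_contra hbk
        push_neg at hbk
        have : 2 ^ r * k ≤ 2 ^ r * b := Nat.mul_le_mul_left _ hbk
        omega
      omega
    · have := iter_scale t b
      rw [this] at hfix
      exact Nat.eq_of_mul_eq_mul_left hp hfix
  · rintro ⟨b, hb1, hbk, hfix⟩
    refine ⟨2 ^ r * b, ?_, ?_, ?_⟩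
    · exact Nat.one_le_iff_ne_zero.mpr (by positivity)
    · have hk : b + 1 ≤ k := by omega
      have : 2 ^ r * (b + 1) ≤ 2 ^ r * k := Nat.mul_le_mul_left _ hk
      have h2 : 2 ^ r * (b + 1) = 2 ^ r * b + 2 ^ r := by ring
      omega
    · rw [iter_scale, hfix]

/-- If `m₁, m₂ ≥ 2` are such that `m₁+1` and `m₂+1` have the same largest odd
divisor (i.e. `mᵢ+1 = 2^{rᵢ}·k` for a common odd `k`), then for every `t ≥ 1`,
`h_{m₁}` has a periodic point of period `t` in `[1, m₁]` iff `h_{m₂}` has one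
in `[1, m₂]`: the power of 2 in `m+1` has no influence on the set of periods. -/
theorem twoDigitKaprekar_periods_independent_of_two_factors
    (m₁ m₂ : ℕ) (hm₁ : 2 ≤ m₁) (hm₂ : 2 ≤ m₂)
    (hodd : ∃ k r₁ r₂ : ℕ, Odd k ∧ m₁ + 1 = 2 ^ r₁ * k ∧ m₂ + 1 = 2 ^ r₂ * k)
    (h₁ h₂ : ℕ → ℕ)
    (hh₁ : ∀ a : ℕ, h₁ a = (2 * (a : ℤ) - (m₁ + 1)).natAbs)
    (hh₂ : ∀ a : ℕ, h₂ a = (2 * (a : ℤ) - (m₂ + 1)).natAbs) :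
    ∀ t : ℕ, 1 ≤ t →
      ((∃ a : ℕ, 1 ≤ a ∧ a ≤ m₁ ∧ h₁^[t] a = a) ↔
        (∃ a : ℕ, 1 ≤ a ∧ a ≤ m₂ ∧ h₂^[t] a = a)) := by
  obtain ⟨k, r₁, r₂, -, hk₁, hk₂⟩ := hodd
  intro t ht
  rw [twoDigitKaprekar_key m₁ k r₁ hk₁ h₁ hh₁ t ht,
      twoDigitKaprekar_key m₂ k r₂ hk₂ h₂ hh₂ t ht]
end

section
/- Let m ≥ 2 be an integer such that m + 1 is a power of 2, and define h_m : ℕ → ℕ by h_m(a) = |2a − (m+1)|. Then for every integer a with 1 ≤ a ≤ m and every t ≥ 1, h_m^[t](a) ≠ a. In other words, the two-digit Kaprekar routine in base m has only the trivial fixed point 0. -/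
private lemma val2_pow_mul_odd (v d : ℕ) (hd : Odd d) :
    padicValNat 2 (2 ^ v * d) = v := by
  haveI : Fact (Nat.Prime 2) := ⟨Nat.prime_two⟩
  have hd0 : d ≠ 0 := by rintro rfl; simp [Nat.odd_iff] at hd
  rw [padicValNat.mul (by positivity) hd0, padicValNat.prime_pow,
    padicValNat.eq_zero_of_not_dvd (by rw [Nat.odd_iff] at hd; omega), Nat.add_zero]

/-- For `m ≥ 2` with `m+1` a power of 2, with `h_m(a) = |2a - (m+1)|`: no
`1 ≤ a ≤ m` is periodic under `h_m`; the two-digit Kaprekar routine in base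
`m` has only the trivial fixed point `0`. -/
theorem twoDigitKaprekar_power_of_two (m : ℕ) (hm : 2 ≤ m)
    (hpow : ∃ k : ℕ, m + 1 = 2 ^ k)
    (h : ℕ → ℕ) (hh : ∀ a : ℕ, h a = (2 * (a : ℤ) - (m + 1)).natAbs) :
    ∀ a : ℕ, 1 ≤ a → a ≤ m → ∀ t : ℕ, 1 ≤ t → h^[t] a ≠ a := by
  haveI : Fact (Nat.Prime 2) := ⟨Nat.prime_two⟩
  obtain ⟨k, hk⟩ := hpow
  have hk2 : 2 ≤ k := by
    by_contra hcon
    interval_cases k <;> omega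
  have hkZ : ((m : ℤ) + 1) = 2 ^ k := by exact_mod_cast hk
  have hstep : ∀ a : ℕ, h a = (2 * (a : ℤ) - 2 ^ k).natAbs := by
    intro a; rw [hh a, hkZ]
  have hPpow : 2 * 2 ^ (k - 1) = 2 ^ k := by
    rw [← pow_succ']
    congr 1
    omega
  have hPpowZ : 2 * (2 : ℤ) ^ (k - 1) = 2 ^ k := by exact_mod_cast hPpow
  -- behaviour at the special point 2^(k-1)
  have hP0 : h (2 ^ (k - 1)) = 0 := by
    rw [hstep]
    have : (2 * ((2 : ℤ) ^ (k - 1)) - 2 ^ k) = 0 := by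
      push_cast [← hPpowZ]; ring
    rw [show ((2 ^ (k - 1) : ℕ) : ℤ) = (2 : ℤ) ^ (k - 1) by push_cast; ring, this]
    rfl
  have h00 : h 0 = 2 ^ k := by
    rw [hstep]; simp [Int.natAbs_pow]
  have hfix : h (2 ^ k) = 2 ^ k := by
    rw [hstep]
    rw [show ((2 ^ k : ℕ) : ℤ) = (2 : ℤ) ^ k by push_cast; ring]
    rw [show 2 * (2 : ℤ) ^ k - 2 ^ k = 2 ^ k by ring]
    simp [Int.natAbs_pow]
  have hPiter : ∀ t : ℕ, 1 ≤ t →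
      h^[t] (2 ^ (k - 1)) = 0 ∨ h^[t] (2 ^ (k - 1)) = 2 ^ k := by
    intro t ht
    induction t with
    | zero => omega
    | succ n ih =>
      rcases Nat.eq_or_lt_of_le ht with h1 | h1
      · left
        rw [← h1]
        simpa using hP0
      · rw [Function.iterate_succ_apply']
        rcases ih (by omega) with h2 | h2 <;> rw [h2]
        · right; exact h00
        · right; exact hfix
  -- main step: away from 2^(k-1), the 2-adic valuation increases
  have hmain : ∀ a : ℕ, 1 ≤ a → a ≤ m → a ≠ 2 ^ (k - 1) →
      1 ≤ h a ∧ h a ≤ m ∧ padicValNat 2 (h a) = padicValNat 2 a + 1 := by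
    intro a h1 h2 hP
    set v := padicValNat 2 a with hv
    have hdvd : 2 ^ v ∣ a := pow_padicValNat_dvd
    obtain ⟨c, hc⟩ := hdvd
    have hcodd : Odd c := by
      rw [Nat.odd_iff]
      by_contra hce
      obtain ⟨c', hc'⟩ : 2 ∣ c := by omega
      have : 2 ^ (v + 1) ∣ a := ⟨c', by rw [hc, hc', pow_succ]; ring⟩
      exact pow_succ_padicValNat_not_dvd (by omega : a ≠ 0) this
    -- v ≤ k - 2
    have hvk : v + 2 ≤ k := by
      by_contra hcon
      have hvk1 : k - 1 ≤ v := by omega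
      obtain ⟨q, hq⟩ : 2 ^ (k - 1) ∣ a :=
        dvd_trans (pow_dvd_pow 2 hvk1) pow_padicValNat_dvd
      rcases Nat.lt_or_ge q 2 with hq2 | hq2
      · interval_cases q <;> omega
      · have : 2 ^ (k - 1) * 2 ≤ 2 ^ (k - 1) * q := Nat.mul_le_mul_left _ hq2
        omega
    -- the key factorization of h a
    have hfact : h a = 2 ^ (v + 1) * ((c : ℤ) - 2 ^ (k - 1 - v)).natAbs := by
      rw [hstep]
      have : 2 * (a : ℤ) - 2 ^ k = 2 ^ (v + 1) * ((c : ℤ) - 2 ^ (k - 1 - v)) := by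
        have hcz : (a : ℤ) = 2 ^ v * c := by exact_mod_cast hc
        have hpows : (2 : ℤ) ^ (v + 1) * 2 ^ (k - 1 - v) = 2 ^ k := by
          rw [← pow_add]
          congr 1
          omega
        rw [hcz, ← hpows]
        ring
      rw [this, Int.natAbs_mul]
      congr 1
    have hdodd : Odd ((c : ℤ) - 2 ^ (k - 1 - v)).natAbs := by
      rw [Int.natAbs_odd]
      have hev : Even ((2 : ℤ) ^ (k - 1 - v)) := by
        refine ⟨2 ^ (k - 1 - v - 1), ?_⟩
        rw [← two_mul, ← pow_succ']
        congr 1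
        omega
      exact (Int.odd_coe_nat c |>.mpr hcodd).sub_even hev
    have hd0 : ((c : ℤ) - 2 ^ (k - 1 - v)).natAbs ≠ 0 := by
      have := hdodd
      rw [Nat.odd_iff] at this
      omega
    constructor
    · rw [hfact]
      have : 0 < 2 ^ (v + 1) := Nat.pow_pos (by omega)
      exact Nat.one_le_iff_ne_zero.mpr (by positivity)
    constructor
    · -- h a ≤ m
      rw [hstep]
      have ha1 : (1 : ℤ) ≤ a := by exact_mod_cast h1
      have ha2 : (a : ℤ) ≤ m := by exact_mod_cast h2
      omega
    · rw [hfact, val2_pow_mul_odd _ _ hdodd]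
  -- induction on the "remaining valuation budget"
  have key : ∀ N : ℕ, ∀ a : ℕ, 1 ≤ a → a ≤ m → k ≤ padicValNat 2 a + N →
      ∀ t : ℕ, 1 ≤ t → h^[t] a ≠ a := by
    intro N
    induction N with
    | zero =>
      intro a h1 h2 hv t ht _
      have : 2 ^ k ∣ a := dvd_trans (pow_dvd_pow 2 (by omega)) pow_padicValNat_dvd
      have := Nat.le_of_dvd (by omega) this
      omega
    | succ N ih =>
      intro a h1 h2 hv t ht heq
      by_cases hP : a = 2 ^ (k - 1)
      · subst hP
        rcases hPiter t ht with h0 | h0 <;> rw [heq] at h0 <;> omega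
      · obtain ⟨hb1, hb2, hb3⟩ := hmain a h1 h2 hP
        refine ih (h a) hb1 hb2 (by omega) t ht ?_
        show h^[t] (h a) = h a
        rw [← Function.iterate_succ_apply, Function.iterate_succ_apply', heq]
  intro a h1 h2 t ht
  exact key k a h1 h2 (by omega) t ht
end

section
/- Let m ≥ 2 be an integer, define h_m : ℕ → ℕ by h_m(a) = |2a − (m+1)|, and let r be the natural number with 2^r ∣ m+1 and 2^{r+1} ∤ m+1. Then for every integer a with 1 ≤ a ≤ m, we have: there exists t ≥ 1 with h_m^[t](a) = a if and only if 2^r ∣ a and 2^{r+1} ∤ a. In other words, the union of all nontrivial fixed sets of the two-digit Kaprekar routine in base m consists exactly of those a·(m−1) with 1 ≤ a ≤ m whose multiplier a has exactly r factors of 2. -/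
/-- One step preserves the set of `x ∈ [1,m]` with `2^r ∥ x` (needs only `2^r ∣ x`). -/
lemma kap_step (m r : ℕ) (hm : 2 ≤ m) (hr1 : 2 ^ r ∣ m + 1) (hr2 : ¬2 ^ (r + 1) ∣ m + 1)
    (h : ℕ → ℕ) (hh : ∀ a : ℕ, h a = (2 * (a : ℤ) - (m + 1)).natAbs)
    (x : ℕ) (hx1 : 1 ≤ x) (hx2 : x ≤ m) (hxd : 2 ^ r ∣ x) :
    1 ≤ h x ∧ h x ≤ m ∧ 2 ^ r ∣ h x ∧ ¬2 ^ (r + 1) ∣ h x := by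
  obtain ⟨s, hs⟩ := hr1
  obtain ⟨k, hk⟩ := hxd
  have hsodd : ¬ 2 ∣ s := by
    intro ⟨c, hc⟩
    exact hr2 ⟨c, by rw [hs, hc, pow_succ]; ring⟩
  have hpow : 0 < 2 ^ r := pow_pos (by norm_num) r
  have hne : 2 * x ≠ m + 1 := by
    intro hEq
    have : 2 ^ r * (2 * k) = 2 ^ r * s := by rw [← hs, ← hEq, hk]; ring
    have h2k : 2 * k = s := Nat.eq_of_mul_eq_mul_left hpow this
    exact hsodd ⟨k, h2k.symm⟩
  have hhx := hh x
  refine ⟨by omega, by omega, ?_, ?_⟩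
  · -- 2^r ∣ h x
    have hsZ : ((m : ℤ) + 1) = 2 ^ r * s := by exact_mod_cast hs
    have hint : (2 * (x : ℤ) - (m + 1)) = (2 ^ r : ℕ) * (2 * (k : ℤ) - s) := by
      rw [hk]; push_cast; linear_combination -hsZ
    rw [hh, hint, Int.natAbs_mul, Int.natAbs_natCast]
    exact Dvd.intro _ rfl
  · -- ¬ 2^(r+1) ∣ h x
    intro hdvd
    have hsZ : ((m : ℤ) + 1) = 2 ^ r * s := by exact_mod_cast hs
    have hint : (2 * (x : ℤ) - (m + 1)) = (2 ^ r : ℕ) * (2 * (k : ℤ) - s) := by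
      rw [hk]; push_cast; linear_combination -hsZ
    rw [hh, hint, Int.natAbs_mul, Int.natAbs_natCast, pow_succ] at hdvd
    have h2w : 2 ∣ (2 * (k : ℤ) - (s:ℤ)).natAbs :=
      (Nat.mul_dvd_mul_iff_left hpow).mp hdvd
    omega

/-- Injectivity on the set of `x ∈ [1,m]` with `2^r ∥ x`. -/
lemma kap_inj (m r : ℕ) (hm : 2 ≤ m) (hr2 : ¬2 ^ (r + 1) ∣ m + 1)
    (h : ℕ → ℕ) (hh : ∀ a : ℕ, h a = (2 * (a : ℤ) - (m + 1)).natAbs)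
    (x y : ℕ) (hxd : 2 ^ r ∣ x) (hxd2 : ¬2 ^ (r + 1) ∣ x)
    (hyd : 2 ^ r ∣ y) (hyd2 : ¬2 ^ (r + 1) ∣ y)
    (heq : h x = h y) : x = y := by
  have h1 := hh x
  have h2 := hh y
  have hcase : x = y ∨ x + y = m + 1 := by omega
  rcases hcase with hc | hc
  · exact hc
  · exfalso
    obtain ⟨u, hu⟩ := hxd
    obtain ⟨v, hv⟩ := hyd
    have huo : ¬ 2 ∣ u := fun ⟨c, hcu⟩ => hxd2 ⟨c, by rw [hu, hcu, pow_succ]; ring⟩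
    have hvo : ¬ 2 ∣ v := fun ⟨c, hcv⟩ => hyd2 ⟨c, by rw [hv, hcv, pow_succ]; ring⟩
    obtain ⟨c, hc2⟩ : 2 ∣ u + v := by omega
    exact hr2 ⟨c, by rw [← hc, hu, hv, pow_succ, ← Nat.mul_add, hc2]; ring⟩

/-- All iterates stay in the good set. -/
lemma kap_closure (m r : ℕ) (hm : 2 ≤ m) (hr1 : 2 ^ r ∣ m + 1) (hr2 : ¬2 ^ (r + 1) ∣ m + 1)
    (h : ℕ → ℕ) (hh : ∀ a : ℕ, h a = (2 * (a : ℤ) - (m + 1)).natAbs)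
    (a : ℕ) (ha : 1 ≤ a ∧ a ≤ m ∧ 2 ^ r ∣ a ∧ ¬2 ^ (r + 1) ∣ a) :
    ∀ n, 1 ≤ h^[n] a ∧ h^[n] a ≤ m ∧ 2 ^ r ∣ h^[n] a ∧ ¬2 ^ (r + 1) ∣ h^[n] a := by
  intro n
  induction n with
  | zero => simpa using ha
  | succ n ih =>
    rw [Function.iterate_succ_apply']
    obtain ⟨i1, i2, i3, _⟩ := ih
    exact kap_step m r hm hr1 hr2 h hh _ i1 i2 i3

/-- For `m ≥ 2` with `2^r ∥ m+1`, with `h_m(a) = |2a - (m+1)|`: a multiplier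
`1 ≤ a ≤ m` is periodic under `h_m` iff `2^r ∥ a`, i.e. the union of all
nontrivial fixed sets consists exactly of the `a·(m-1)` whose multiplier `a`
has exactly `r` factors of 2. -/
theorem twoDigitKaprekar_union_of_fixed_sets (m r : ℕ) (hm : 2 ≤ m)
    (hr : 2 ^ r ∣ m + 1 ∧ ¬2 ^ (r + 1) ∣ m + 1)
    (h : ℕ → ℕ) (hh : ∀ a : ℕ, h a = (2 * (a : ℤ) - (m + 1)).natAbs) :
    ∀ a : ℕ, 1 ≤ a → a ≤ m →
      ((∃ t : ℕ, 1 ≤ t ∧ h^[t] a = a) ↔ (2 ^ r ∣ a ∧ ¬2 ^ (r + 1) ∣ a)) := by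
  obtain ⟨hr1, hr2⟩ := hr
  intro a ha1 ha2
  constructor
  · rintro ⟨t, ht1, ht2⟩
    -- congruence: h^[n] a ≡ ± 2^n a (mod m+1)
    have hcong : ∀ n : ℕ, ((m : ℤ) + 1) ∣ ((h^[n] a : ℤ) - 2 ^ n * a) ∨
        ((m : ℤ) + 1) ∣ ((h^[n] a : ℤ) + 2 ^ n * a) := by
      intro n
      induction n with
      | zero => left; simp
      | succ n ih =>
        rw [Function.iterate_succ_apply']
        set b : ℕ := h^[n] a with hb
        have habs : ((h b : ℤ) = 2 * b - (m + 1)) ∨ ((h b : ℤ) = -(2 * b - (m + 1))) := by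
          have := hh b; omega
        rcases ih with ⟨k, hk⟩ | ⟨k, hk⟩ <;> rcases habs with hab | hab
        · exact Or.inl ⟨2 * k - 1, by rw [hab, pow_succ]; push_cast; linarith⟩
        · exact Or.inr ⟨-(2 * k) + 1, by rw [hab, pow_succ]; push_cast; linarith⟩
        · exact Or.inr ⟨2 * k - 1, by rw [hab, pow_succ]; push_cast; linarith⟩
        · exact Or.inl ⟨-(2 * k) + 1, by rw [hab, pow_succ]; push_cast; linarith⟩
    constructor
    · -- 2^r ∣ a
      have hc := hcong t
      rw [ht2] at hc
      have hmn : ∃ c : ℕ, ¬ 2 ∣ c ∧ (m + 1) ∣ a * c := by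
        rcases hc with hd | hd
        · refine ⟨2 ^ t - 1, by have := Nat.one_le_two_pow (n := t); have h2t : 2 ∣ 2 ^ t := dvd_pow_self 2 (by omega : t ≠ 0); omega, ?_⟩
          have : ((m : ℤ) + 1) ∣ (a * (2 ^ t - 1) : ℤ) := by
            have : ((a : ℤ) * (2 ^ t - 1)) = -((a : ℤ) - 2 ^ t * a) := by ring
            rw [this]; exact dvd_neg.mpr hd
          have h2 : ((m : ℤ) + 1) ∣ ((a * (2 ^ t - 1) : ℕ) : ℤ) := by
            have hcast : ((a * (2 ^ t - 1) : ℕ) : ℤ) = (a : ℤ) * (2 ^ t - 1) := by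
              push_cast [Nat.one_le_two_pow (n := t)]; ring
            rw [hcast]; exact this
          exact_mod_cast h2
        · refine ⟨2 ^ t + 1, by have := Nat.one_le_two_pow (n := t); have h2t : 2 ∣ 2 ^ t := dvd_pow_self 2 (by omega : t ≠ 0); omega, ?_⟩
          have : ((m : ℤ) + 1) ∣ (a * (2 ^ t + 1) : ℤ) := by
            have : ((a : ℤ) * (2 ^ t + 1)) = (a : ℤ) + 2 ^ t * a := by ring
            rw [this]; exact hd
          exact_mod_cast this
      obtain ⟨c, hco, hcd⟩ := hmn
      have hcop : Nat.Coprime (2 ^ r) c :=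
        Nat.Coprime.pow_left r (Nat.coprime_two_left.mpr (Nat.odd_iff.mpr (by omega)))
      exact hcop.dvd_of_dvd_mul_right (hr1.trans hcd)
    · -- ¬ 2^(r+1) ∣ a
      intro hcon
      have hra : 2 ^ r ∣ a := (pow_dvd_pow 2 (Nat.le_succ r)).trans hcon
      have hstep := kap_step m r hm hr1 hr2 h hh a ha1 ha2 hra
      have hcl := kap_closure m r hm hr1 hr2 h hh (h a) hstep (t - 1)
      rw [← Function.iterate_succ_apply] at hcl
      have ht' : t - 1 + 1 = t := by omega
      simp only [Nat.succ_eq_add_one, ht', ht2] at hcl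
      exact hcl.2.2.2 hcon
  · rintro ⟨hra, hra2⟩
    have hP := kap_closure m r hm hr1 hr2 h hh a ⟨ha1, ha2, hra, hra2⟩
    -- pigeonhole
    have hmap : ∀ i ∈ Finset.range (m + 2), h^[i] a ∈ Finset.Icc 1 m := by
      intro i _
      exact Finset.mem_Icc.mpr ⟨(hP i).1, (hP i).2.1⟩
    have hcard : (Finset.Icc 1 m).card < (Finset.range (m + 2)).card := by
      simp [Nat.card_Icc]
    obtain ⟨i, _, j, _, hij, heq⟩ :=
      Finset.exists_ne_map_eq_of_card_lt_of_maps_to hcard hmap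
    -- peel
    have hpeel : ∀ i j : ℕ, i < j → h^[i] a = h^[j] a → h^[j - i] a = a := by
      intro i
      induction i with
      | zero => intro j _ hij2; simpa using hij2.symm
      | succ i ih =>
        intro j hlt hij2
        obtain ⟨j', rfl⟩ : ∃ j', j = j' + 1 := ⟨j - 1, by omega⟩
        rw [Function.iterate_succ_apply', Function.iterate_succ_apply'] at hij2
        have heq2 := kap_inj m r hm hr2 h hh _ _ (hP i).2.2.1 (hP i).2.2.2
          (hP j').2.2.1 (hP j').2.2.2 hij2
        have := ih j' (by omega) heq2
        simpa using this
    rcases Nat.lt_or_ge i j with hlt | hge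
    · exact ⟨j - i, by omega, hpeel i j hlt heq⟩
    · have hlt : j < i := by omega
      exact ⟨i - j, by omega, hpeel j i hlt heq.symm⟩
end

section
/- Let m ≥ 2 be an integer, define h_m : ℕ → ℕ by h_m(a) = |2a − (m+1)|, and let r be the natural number with 2^r ∣ m+1 and 2^{r+1} ∤ m+1. Then for every integer a with 1 ≤ a ≤ m, there exists t ≤ r + 2 such that either h_m^[t](a) = 0 or (2^r ∣ h_m^[t](a) and 2^{r+1} ∤ h_m^[t](a)). In other words, every two-digit number in base m enters a fixed set of the Kaprekar routine within at most r + 2 iterations. -/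
/-- For `m ≥ 2` with `2^r ∥ m+1`, with `h_m(a) = |2a - (m+1)|`: every
`1 ≤ a ≤ m` reaches, within `r+2` iterations of `h_m`, either `0` or a value
with exactly `r` factors of 2, i.e. every two-digit number in base `m` enters
a fixed set of the Kaprekar routine within at most `r+2` iterations. -/
theorem twoDigitKaprekar_max_step (m r : ℕ) (hm : 2 ≤ m)
    (hr : 2 ^ r ∣ m + 1 ∧ ¬2 ^ (r + 1) ∣ m + 1)
    (h : ℕ → ℕ) (hh : ∀ a : ℕ, h a = (2 * (a : ℤ) - (m + 1)).natAbs) :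
    ∀ a : ℕ, 1 ≤ a → a ≤ m →
      ∃ t : ℕ, t ≤ r + 2 ∧
        (h^[t] a = 0 ∨ (2 ^ r ∣ h^[t] a ∧ ¬2 ^ (r + 1) ∣ h^[t] a)) := by
  obtain ⟨hr1, hr2⟩ := hr
  -- transfer divisibility of `h a` to divisibility in `ℤ`
  have key : ∀ (j a : ℕ), (2:ℕ)^j ∣ h a ↔ (2:ℤ)^j ∣ (2*(a:ℤ) - ((m:ℤ)+1)) := by
    intro j a
    rw [hh, ← Int.natCast_dvd]
    push_cast
    rfl
  have hM1 : ∀ j, j ≤ r → (2:ℤ)^j ∣ ((m:ℤ)+1) := by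
    intro j hj
    have : (2:ℤ)^r ∣ ((m:ℤ)+1) := by exact_mod_cast hr1
    exact dvd_trans (pow_dvd_pow 2 hj) this
  have hM2 : ¬ (2:ℤ)^(r+1) ∣ ((m:ℤ)+1) := by
    intro hc
    exact hr2 (by exact_mod_cast hc)
  -- one step, low valuation: valuation goes up by exactly one
  have step_lt : ∀ (s a : ℕ), s + 2 ≤ r → 2^s ∣ a → ¬ 2^(s+1) ∣ a →
      2^(s+1) ∣ h a ∧ ¬ 2^(s+2) ∣ h a := by
    rintro s a hs ⟨b, rfl⟩ hnd
    have hb : ¬ (2:ℤ) ∣ (b:ℤ) := by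
      intro hb
      have hb' : 2 ∣ b := by exact_mod_cast hb
      exact hnd (by rw [pow_succ]; exact mul_dvd_mul_left _ hb')
    have h2a : (2:ℤ) * ((2^s*b : ℕ):ℤ) = 2^(s+1) * b := by push_cast; ring
    constructor
    · rw [key, h2a]
      exact dvd_sub (Dvd.intro b rfl) (hM1 (s+1) (by omega))
    · rw [key, h2a]
      intro hc
      have h1 : (2:ℤ)^(s+2) ∣ 2^(s+1)*b := by
        have := dvd_add hc (hM1 (s+2) hs)
        simpa using this
      apply hb
      have h2 : (2:ℤ)^(s+1) * 2 ∣ 2^(s+1) * b := by rwa [← pow_succ]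
      exact (mul_dvd_mul_iff_left (by positivity : (2:ℤ)^(s+1) ≠ 0)).mp h2
  -- one step from valuation exactly r-1: valuation jumps to ≥ r+1 (or 0)
  have step_eq : ∀ a : ℕ, 1 ≤ r → 2^(r-1) ∣ a → ¬ 2^r ∣ a → 2^(r+1) ∣ h a := by
    rintro a hr0 ⟨b, rfl⟩ hnd
    obtain ⟨c, hc⟩ := hr1
    have hbodd : ¬ (2:ℤ) ∣ (b:ℤ) := by
      intro hb0
      have hb : 2 ∣ b := by exact_mod_cast hb0
      apply hnd
      have : (2:ℕ)^(r-1) * 2 ∣ 2^(r-1) * b := mul_dvd_mul_left _ hb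
      rwa [← pow_succ, Nat.sub_add_cancel hr0] at this
    have hcodd : ¬ (2:ℤ) ∣ (c:ℤ) := by
      intro hcd0
      have hcd : 2 ∣ c := by exact_mod_cast hcd0
      apply hr2
      rw [hc, pow_succ]
      exact mul_dvd_mul_left _ hcd
    rw [key]
    have e1 : (2:ℤ) * ((2^(r-1)*b : ℕ):ℤ) = 2^r * b := by
      push_cast
      rw [← mul_assoc, ← pow_succ']
      congr 2
      omega
    have e2 : ((m:ℤ)+1) = 2^r * c := by exact_mod_cast congrArg (Nat.cast : ℕ → ℤ) hc
    rw [e1, e2, ← mul_sub, pow_succ]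
    refine mul_dvd_mul_left _ ?_
    refine (Int.even_sub.mpr ?_).two_dvd
    exact iff_of_false (fun he => hbodd he.two_dvd) (fun he => hcodd he.two_dvd)
  -- one step from valuation ≥ r+1: valuation becomes exactly r
  have step_high : ∀ a : ℕ, 2^(r+1) ∣ a → 2^r ∣ h a ∧ ¬ 2^(r+1) ∣ h a := by
    intro a ha
    have ha' : (2:ℤ)^(r+1) ∣ 2*(a:ℤ) := by
      have h1 : (2:ℤ)^(r+1) ∣ (a:ℤ) := by exact_mod_cast ha
      exact Dvd.dvd.mul_left h1 2
    constructor
    · rw [key]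
      exact dvd_sub (dvd_trans (pow_dvd_pow 2 (by omega)) ha') (hM1 r le_rfl)
    · rw [key]
      intro hcd
      exact hM2 (by have := dvd_sub ha' hcd; simpa using this)
  -- main induction: from valuation ≥ r - k, reach a fixed point in ≤ k + 2 steps
  have aux : ∀ k, ∀ a : ℕ, 2^(r-k) ∣ a → ∃ t : ℕ, t ≤ k + 2 ∧
      (h^[t] a = 0 ∨ (2 ^ r ∣ h^[t] a ∧ ¬2 ^ (r + 1) ∣ h^[t] a)) := by
    intro k
    induction k with
    | zero =>
      intro a ha
      rw [Nat.sub_zero] at ha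
      by_cases hd : 2^(r+1) ∣ a
      · exact ⟨1, by omega, Or.inr (by simp only [Function.iterate_one]; exact step_high a hd)⟩
      · exact ⟨0, by omega, Or.inr ⟨ha, hd⟩⟩
    | succ k ih =>
      intro a ha
      by_cases hk : r ≤ k
      · obtain ⟨t, ht, hg⟩ := ih a (by rw [Nat.sub_eq_zero_of_le hk]; exact one_dvd _)
        exact ⟨t, by omega, hg⟩
      · by_cases hd : 2^(r-k) ∣ a
        · obtain ⟨t, ht, hg⟩ := ih a hd
          exact ⟨t, by omega, hg⟩
        · by_cases hk0 : k = 0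
          · subst hk0
            have h1 : 2^(r+1) ∣ h a := by
              refine step_eq a (by omega) ?_ (by simpa using hd)
              have : r - 1 = r - (0+1) := by omega
              rw [this]; exact ha
            by_cases h0 : h a = 0
            · exact ⟨1, by omega, Or.inl (by simp [h0])⟩
            · obtain ⟨t, ht, hg⟩ := ih (h a)
                (by rw [Nat.sub_zero]; exact dvd_trans (pow_dvd_pow 2 (by omega)) h1)
              exact ⟨t+1, by omega, by rwa [Function.iterate_succ_apply]⟩
          · have hs : r - (k+1) + 1 = r - k := by omega
            have hs2 : r - (k+1) + 2 ≤ r := by omega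
            have := step_lt (r-(k+1)) a hs2 ha (by rwa [hs])
            obtain ⟨t, ht, hg⟩ := ih (h a) (by rw [← hs]; exact this.1)
            exact ⟨t+1, by omega, by rwa [Function.iterate_succ_apply]⟩
  intro a h1 h2
  obtain ⟨t, ht, hg⟩ := aux r a (by simpa using one_dvd a)
  exact ⟨t, by omega, hg⟩
end
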